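/- arXiv:1009.2277 — 9 statements merged into one kernel-verified Lean document; each statement's English description precedes it below -/
import Mathlib

section
/- Let X be a compact metric space and f : X → X a continuous map. Then f is Δ-transitive if and only if for every positive integer m and all nonempty open sets U, V₁, …, V_m ⊆ X there exists an integer n ≥ 1 such that U ∩ f⁻ⁿ(V₁) ∩ f⁻²ⁿ(V₂) ∩ … ∩ f⁻ᵐⁿ(V_m) ≠ ∅. -/
open Set Function

/-- A continuous self-map is topologically transitive if every pair of nonempty
open sets is connected by some positive iterate. -/
def TopTransitive {X : Type*} [TopologicalSpace X] (f : X → X) : Prop :=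
  ∀ U V : Set X, IsOpen U → IsOpen V → U.Nonempty → V.Nonempty →
    ∃ n : ℕ, 0 < n ∧ (f^[n] '' U ∩ V).Nonempty

/-- The map `f^{(∗m)} = f × f² × ⋯ × f^m` acting on `X^m` (coordinates indexed by `Fin m`,
where coordinate `i` is moved by `f^[i+1]`). -/
def starMap {X : Type*} (f : X → X) (m : ℕ) : (Fin m → X) → (Fin m → X) :=
  fun x i => f^[(i : ℕ) + 1] (x i)

/-- `f` is weakly mixing if `f × f` is topologically transitive. -/
def WeaklyMixing {X : Type*} [TopologicalSpace X] (f : X → X) : Prop :=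
  TopTransitive (fun p : X × X => (f p.1, f p.2))

/-- `f` is multi-transitive if `f × f² × ⋯ × f^m` is topologically transitive
for every `m ≥ 1`. -/
def MultiTransitive {X : Type*} [TopologicalSpace X] (f : X → X) : Prop :=
  ∀ m : ℕ, 1 ≤ m → TopTransitive (starMap f m)

/-- `f` is Δ-transitive if for each `m ≥ 1` there is a residual set `Y ⊆ X` such that
for every `x ∈ Y` the diagonal tuple `(x, …, x)` has dense orbit under `f × f² × ⋯ × f^m`. -/
def DeltaTransitive {X : Type*} [TopologicalSpace X] (f : X → X) : Prop :=
  ∀ m : ℕ, 1 ≤ m → ∃ Y : Set X, Y ∈ residual X ∧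
    ∀ x ∈ Y, Dense (Set.range fun n : ℕ => (starMap f m)^[n] (fun _ : Fin m => x))

/-- A set `S ⊆ ℕ` is syndetic if there is `L > 0` with `[n, n+L] ∩ S ≠ ∅` for every `n`. -/
def Syndetic (S : Set ℕ) : Prop :=
  ∃ L : ℕ, 0 < L ∧ ∀ n : ℕ, ∃ k ∈ S, n ≤ k ∧ k ≤ n + L

/-- `N(U,V;f) = {n > 0 : f^n(U) ∩ V ≠ ∅}`. -/
def NSet {X : Type*} (f : X → X) (U V : Set X) : Set ℕ :=
  {n | 0 < n ∧ (f^[n] '' U ∩ V).Nonempty}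

/-- `f` is syndetically transitive if `N(U,V;f)` is syndetic for all nonempty open `U, V`. -/
def SyndeticallyTransitive {X : Type*} [TopologicalSpace X] (f : X → X) : Prop :=
  ∀ U V : Set X, IsOpen U → IsOpen V → U.Nonempty → V.Nonempty → Syndetic (NSet f U V)

/-- `f` is strongly transitive if for every nonempty open `U` there is `M > 0` with
`⋃_{j=1}^M f^j(U) = X`. -/
def StronglyTransitive {X : Type*} [TopologicalSpace X] (f : X → X) : Prop :=
  ∀ U : Set X, IsOpen U → U.Nonempty →
    ∃ M : ℕ, 0 < M ∧ (⋃ j ∈ Finset.Icc 1 M, f^[j] '' U) = Set.univ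

/-- `f` is minimal if the only nonempty closed `f`-invariant subset is the whole space. -/
def MinimalMap {X : Type*} [TopologicalSpace X] (f : X → X) : Prop :=
  ∀ K : Set X, IsClosed K → K.Nonempty → f '' K ⊆ K → K = Set.univ

lemma starMap_iterate {X : Type*} (f : X → X) (m n : ℕ) (x : Fin m → X) :
    (starMap f m)^[n] x = fun i : Fin m => f^[((i : ℕ) + 1) * n] (x i) := by
  induction n generalizing x with
  | zero => simp
  | succ n ih =>
    rw [Function.iterate_succ_apply, ih]
    funext i
    simp only [starMap, ← Function.iterate_add_apply]
    congr 1


/-- `f` is Δ-transitive iff for every `m ≥ 1` and all nonempty open sets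
`U, V₁, …, V_m` there is `n ≥ 1` with `U ∩ f⁻ⁿ(V₁) ∩ f⁻²ⁿ(V₂) ∩ ⋯ ∩ f⁻ᵐⁿ(V_m) ≠ ∅`. -/
theorem statement0 {X : Type*} [MetricSpace X] [CompactSpace X] (f : X → X)
    (hf : Continuous f) :
    DeltaTransitive f ↔
      ∀ m : ℕ, 1 ≤ m → ∀ U : Set X, IsOpen U → U.Nonempty →
        ∀ V : Fin m → Set X, (∀ i, IsOpen (V i)) → (∀ i, (V i).Nonempty) →
          ∃ n : ℕ, 1 ≤ n ∧
            (U ∩ ⋂ i : Fin m, f^[((i : ℕ) + 1) * n] ⁻¹' V i).Nonempty := by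
  constructor
  · -- forward direction
    intro hD m hm U hU hUne V hV hVne
    obtain ⟨Y, hYres, hYorb⟩ := hD m hm
    have hYd : Dense Y := dense_of_mem_residual hYres
    obtain ⟨x, hxU, hxY⟩ := hYd.inter_open_nonempty U hU hUne
    by_contra hcon
    push_neg at hcon
    set T := starMap f m with hT
    have hkey : ∀ n : ℕ, T^[n] (fun _ : Fin m => x) =
        fun i : Fin m => f^[((i : ℕ) + 1) * n] x :=
      fun n => starMap_iterate f m n _
    have hTn : ∀ n, 1 ≤ n → T^[n] (fun _ : Fin m => x) ∉ univ.pi V := by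
      intro n hn hmem
      have h0 := hcon n hn
      rw [Set.eq_empty_iff_forall_notMem] at h0
      refine h0 x ⟨hxU, ?_⟩
      rw [Set.mem_iInter]
      intro i
      have := hmem i (mem_univ i)
      rwa [hkey] at this
    have hDorb := hYorb x hxY
    have hWopen : IsOpen (univ.pi V) := isOpen_set_pi finite_univ fun i _ => hV i
    have hWne : (univ.pi V).Nonempty :=
      ⟨fun i => (hVne i).some, fun i _ => (hVne i).some_mem⟩
    obtain ⟨z, hzW, n, hzn⟩ := hDorb.inter_open_nonempty _ hWopen hWne
    rw [← hzn] at hzW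
    simp only at hzW
    -- n must be 0
    rcases Nat.eq_zero_or_pos n with rfl | hn
    · -- the diagonal point lies in W
      have hpW : (fun _ : Fin m => x) ∈ univ.pi V := by simpa using hzW
      -- tail closure argument : univ.pi V ⊆ {diag x}
      have hWsub : univ.pi V ⊆ {fun _ : Fin m => x} := by
        intro g hg
        have hg' : g ∈ closure (Set.range fun n : ℕ => T^[n] (fun _ : Fin m => x)) := by
          rw [hDorb.closure_eq]; trivial
        have hsub : Set.range (fun n : ℕ => T^[n] (fun _ : Fin m => x)) ⊆
            {fun _ : Fin m => x} ∪
              closure (Set.range fun n : ℕ => T^[n + 1] (fun _ : Fin m => x)) := by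
          rintro _ ⟨k, rfl⟩
          cases k with
          | zero => exact Or.inl rfl
          | succ k => exact Or.inr (subset_closure ⟨k, rfl⟩)
        have hclosed : IsClosed ({fun _ : Fin m => x} ∪
            closure (Set.range fun n : ℕ => T^[n + 1] (fun _ : Fin m => x))) :=
          isClosed_singleton.union isClosed_closure
        have hg2 := (closure_minimal hsub hclosed) hg'
        rcases hg2 with hg2 | hg2
        · exact hg2
        · exfalso
          obtain ⟨w, hw1, k, hk⟩ := mem_closure_iff.1 hg2 _ hWopen hg
          rw [← hk] at hw1
          exact hTn (k + 1) (Nat.succ_le_succ (Nat.zero_le k)) hw1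
      have hVsingle : ∀ i, V i = {x} := by
        intro i
        apply Set.eq_singleton_iff_unique_mem.2
        refine ⟨hpW i (mem_univ i), fun y hy => ?_⟩
        have hupd : Function.update (fun _ : Fin m => x) i y ∈ univ.pi V := by
          intro j _
          rcases eq_or_ne j i with rfl | hj
          · simpa using hy
          · simp only [Function.update_of_ne hj]
            exact hpW j (mem_univ j)
        have h1 : Function.update (fun _ : Fin m => x) i y = fun _ : Fin m => x :=
          hWsub hupd
        have h2 := congrFun h1 i
        simpa using h2
      -- now {x} is open
      have hm0 : 0 < m := hm
      set i0 : Fin m := ⟨0, hm0⟩ with hi0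
      have hxopen : IsOpen ({x} : Set X) := hVsingle i0 ▸ hV i0
      have hTpne : ∀ n, 1 ≤ n → T^[n] (fun _ : Fin m => x) ≠ (fun _ : Fin m => x) :=
        fun n hn hne => hTn n hn (by rw [hne]; exact hpW)
      -- the diagonal point is isolated in the product
      have hpopen : IsOpen ({fun _ : Fin m => x} : Set (Fin m → X)) := by
        have hEq : (univ.pi fun _ : Fin m => ({x} : Set X)) =
            ({fun _ : Fin m => x} : Set (Fin m → X)) := by
          ext g
          simp only [Set.mem_pi, mem_univ, forall_true_left, Set.mem_singleton_iff]
          constructor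
          · intro h; funext i; exact h i
          · intro h i; rw [h]
        exact hEq ▸ isOpen_set_pi finite_univ fun i _ => hxopen
      -- every point of Y is eventually mapped to x
      have hA : ∀ y ∈ Y, ∃ j : ℕ, f^[j] y = x := by
        intro y hy
        obtain ⟨w, hw1, j, hj⟩ := (hYorb y hy).inter_open_nonempty _ hpopen
          ⟨fun _ : Fin m => x, rfl⟩
        rw [← hj] at hw1
        simp only [Set.mem_singleton_iff] at hw1
        refine ⟨j, ?_⟩
        have h2 := congrFun hw1 i0
        rw [starMap_iterate] at h2
        simpa [hi0] using h2
      set K : Set X := (⋃ j : ℕ, f^[j] ⁻¹' {x})ᶜ with hK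
      have hKclosed : IsClosed K :=
        (isOpen_iUnion fun j : ℕ => hxopen.preimage (hf.iterate j)).isClosed_compl
      have hKint : interior K = ∅ := by
        by_contra hne
        obtain ⟨y, hy1, hy2⟩ := hYd.inter_open_nonempty _ isOpen_interior
          (Set.nonempty_iff_ne_empty.2 hne)
        obtain ⟨j, hj⟩ := hA y hy2
        exact (interior_subset hy1) (Set.mem_iUnion.2 ⟨j, hj⟩)
      have horbK : ∀ n, 1 ≤ n → f^[n] x ∈ K := by
        intro n hn
        intro hmem
        obtain ⟨j, hj⟩ := Set.mem_iUnion.1 hmem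
        have hq : f^[j + n] x = x := by
          rw [Function.iterate_add_apply]; exact hj
        refine hTpne (j + n) (le_trans hn (Nat.le_add_left n j)) ?_
        rw [hkey]
        funext i
        rw [mul_comm, Function.iterate_mul]
        exact Function.iterate_fixed hq ((i : ℕ) + 1)
      -- orbit of x is dense in X
      have hxorb : Dense (Set.range fun n : ℕ => f^[n] x) := by
        rw [dense_iff_inter_open]
        intro u hu hune
        have hu' : IsOpen ((fun g : Fin m → X => g i0) ⁻¹' u) :=
          hu.preimage (continuous_apply i0)
        have hu'ne : ((fun g : Fin m → X => g i0) ⁻¹' u).Nonempty :=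
          ⟨fun _ => hune.some, hune.some_mem⟩
        obtain ⟨w, hw1, k, hk⟩ := hDorb.inter_open_nonempty _ hu' hu'ne
        rw [← hk] at hw1
        simp only [Set.mem_preimage, hkey] at hw1
        refine ⟨f^[k] x, ?_, ⟨k, rfl⟩⟩
        simpa [hi0] using hw1
      -- conclude
      by_cases hsing : ∀ y : X, y = x
      · have hfx : f x = x := hsing (f x)
        refine hTpne 1 le_rfl ?_
        rw [hkey]
        funext i
        simpa using Function.iterate_fixed hfx ((i : ℕ) + 1)
      · push_neg at hsing
        obtain ⟨y, hy⟩ := hsing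
        have hsub2 : ({x} : Set X)ᶜ ⊆ K := by
          intro w hw
          have hmemc : w ∈ closure (Set.range fun n : ℕ => f^[n] x) := by
            rw [hxorb.closure_eq]; trivial
          have hsub : Set.range (fun n : ℕ => f^[n] x) ⊆ ({x} : Set X) ∪ K := by
            rintro _ ⟨k, rfl⟩
            cases k with
            | zero => exact Or.inl rfl
            | succ k => exact Or.inr (horbK (k + 1) (Nat.succ_le_succ (Nat.zero_le k)))
          have hw2 := (closure_minimal hsub (isClosed_singleton.union hKclosed)) hmemc
          rcases hw2 with hw2 | hw2
          · exact absurd hw2 hw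
          · exact hw2
        have hmemint : y ∈ interior K :=
          interior_maximal hsub2 (isOpen_compl_iff.2 isClosed_singleton) hy
        rw [hKint] at hmemint
        exact hmemint
    · exact hTn n hn hzW
  · -- reverse direction
    intro h m hm
    obtain ⟨B, hBc, -, hB⟩ := TopologicalSpace.exists_countable_basis (Fin m → X)
    set T := starMap f m with hT
    have hkey : ∀ (n : ℕ) (x : X), T^[n] (fun _ : Fin m => x) =
        fun i : Fin m => f^[((i : ℕ) + 1) * n] x :=
      fun n x => starMap_iterate f m n _
    set G : Set (Fin m → X) → Set X :=
      fun b => ⋃ n : ℕ, (fun x : X => T^[n] (fun _ : Fin m => x)) ⁻¹' b with hG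
    have hGopen : ∀ b, IsOpen b → IsOpen (G b) := by
      intro b hb
      refine isOpen_iUnion fun n => hb.preimage ?_
      have hEq : (fun x : X => T^[n] (fun _ : Fin m => x)) =
          fun x : X => fun i : Fin m => f^[((i : ℕ) + 1) * n] x := by
        funext x; exact hkey n x
      rw [hEq]
      exact continuous_pi fun i => hf.iterate _
    have hGdense : ∀ b ∈ B, b.Nonempty → Dense (G b) := by
      intro b hbB hbne
      rw [dense_iff_inter_open]
      intro u hu hune
      obtain ⟨z, hz⟩ := hbne
      obtain ⟨w, hw1, hw2⟩ := isOpen_pi_iff'.1 (hB.isOpen hbB) z hz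
      obtain ⟨n, hn, y, hyU, hyI⟩ := h m hm u hu hune w (fun i => (hw1 i).1)
        (fun i => ⟨z i, (hw1 i).2⟩)
      refine ⟨y, hyU, Set.mem_iUnion.2 ⟨n, ?_⟩⟩
      rw [Set.mem_preimage, hkey]
      refine hw2 fun i _ => ?_
      exact Set.mem_iInter.1 hyI i
    refine ⟨(⋂ b ∈ {b ∈ B | b.Nonempty}, G b), ?_, ?_⟩
    · exact (countable_bInter_mem (hBc.mono (Set.sep_subset _ _))).2
        fun b hb => residual_of_dense_open (hGopen b (hB.isOpen hb.1)) (hGdense b hb.1 hb.2)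
    · intro x hx
      rw [hB.dense_iff]
      intro o hoB hone
      obtain ⟨n, hn⟩ := Set.mem_iUnion.1 (Set.mem_iInter₂.1 hx o ⟨hoB, hone⟩)
      exact ⟨T^[n] (fun _ : Fin m => x), hn, ⟨n, rfl⟩⟩
end

section
/- Let X be a compact metric space and f : X → X a continuous map which is weakly mixing and syndetically transitive. Then for every m ≥ 1 the map f^{(∗m)} = f × f² × … × f^m : X^m → X^m is weakly mixing and syndetically transitive. In particular, f is multi-transitive. -/
open Set Function

namespace Statement1Aux

/-- Thickly syndetic sets of naturals. -/
def ThicklySyndetic (S : Set ℕ) : Prop :=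
  ∀ k : ℕ, Syndetic {n | ∀ j ≤ k, n + j ∈ S}

lemma syndetic_mono {S T : Set ℕ} (h : S ⊆ T) (hS : Syndetic S) : Syndetic T := by
  obtain ⟨L, hL, hs⟩ := hS
  exact ⟨L, hL, fun n => by obtain ⟨k, hk, h1, h2⟩ := hs n; exact ⟨k, h hk, h1, h2⟩⟩

lemma ThicklySyndetic.syndetic {S : Set ℕ} (h : ThicklySyndetic S) : Syndetic S := by
  refine syndetic_mono ?_ (h 0)
  intro n hn
  simpa using hn 0 le_rfl

lemma ts_univ : ThicklySyndetic (Set.univ : Set ℕ) := by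
  intro k
  exact ⟨1, one_pos, fun n => ⟨n, by simp, le_rfl, Nat.le_add_right _ _⟩⟩

lemma ThicklySyndetic.inter {S T : Set ℕ} (hS : ThicklySyndetic S) (hT : ThicklySyndetic T) :
    ThicklySyndetic (S ∩ T) := by
  intro k
  obtain ⟨L, hL, hA⟩ := hS k
  obtain ⟨L', hL', hB⟩ := hT (k + L)
  refine ⟨L' + L, by omega, fun n => ?_⟩
  obtain ⟨b, hb, hnb, hbL'⟩ := hB n
  obtain ⟨a, ha, hba, haL⟩ := hA b
  refine ⟨a, fun j hj => ⟨ha j hj, ?_⟩, le_trans hnb hba, by omega⟩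
  have h2 := hb (a + j - b) (by omega)
  rwa [show b + (a + j - b) = a + j by omega] at h2

lemma ThicklySyndetic.dilate {S : Set ℕ} (hS : ThicklySyndetic S) {i : ℕ} (hi : 0 < i) :
    ThicklySyndetic {n | i * n ∈ S} := by
  intro k
  obtain ⟨L, hL, hA⟩ := hS (i * k + i)
  refine ⟨L + i, by omega, fun n => ?_⟩
  obtain ⟨m, hm, hnm, hmL⟩ := hA (i * n)
  obtain ⟨q, hq1, hq2⟩ : ∃ q, m < i * q ∧ i * q ≤ m + i := by
    refine ⟨m / i + 1, ?_, ?_⟩ <;>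
    · have h1 := Nat.div_add_mod m i
      have h2 := Nat.mod_lt m hi
      rw [Nat.mul_add, Nat.mul_one]
      omega
  refine ⟨q, fun j hj => ?_, ?_, ?_⟩
  · -- i * (q + j) ∈ S
    have hjk : i * j ≤ i * k := Nat.mul_le_mul_left i hj
    have h2 := hm (i * q + i * j - m) (by omega)
    rwa [show m + (i * q + i * j - m) = i * (q + j) by rw [Nat.mul_add]; omega] at h2
  · -- n ≤ q
    exact (Nat.lt_of_mul_lt_mul_left (show i * n < i * q by omega)).le
  · -- q ≤ n + (L + i)
    have h4 : L ≤ i * L := Nat.le_mul_of_pos_left L hi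
    have h5 : i ≤ i * i := Nat.le_mul_of_pos_left i hi
    have h6 : i * q ≤ i * (n + (L + i)) := by
      rw [Nat.mul_add, Nat.mul_add]
      omega
    exact Nat.le_of_mul_le_mul_left h6 hi

lemma ts_iInter : ∀ (m : ℕ) (S : Fin m → Set ℕ),
    (∀ i, ThicklySyndetic (S i)) → ThicklySyndetic (⋂ i, S i) := by
  intro m
  induction m with
  | zero => intro S _; simpa using ts_univ
  | succ m ih =>
    intro S h
    have he : (⋂ i, S i) = S 0 ∩ ⋂ i : Fin m, S i.succ := by
      ext n
      simp [Set.mem_iInter, Fin.forall_fin_succ]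
    rw [he]
    exact (h 0).inter (ih _ fun i => h i.succ)

lemma prod_map_iterate {α β : Type*} (g : α → α) (h : β → β) (n : ℕ) (p : α × β) :
    (fun q : α × β => (g q.1, h q.2))^[n] p = (g^[n] p.1, h^[n] p.2) := by
  induction n generalizing p with
  | zero => rfl
  | succ n ihn =>
    rw [Function.iterate_succ_apply, ihn]
    rfl

lemma starMap_iterate {X : Type*} (f : X → X) (m n : ℕ) (x : Fin m → X) (i : Fin m) :
    (starMap f m)^[n] x i = f^[((i : ℕ) + 1) * n] (x i) := by
  induction n generalizing x with
  | zero => simp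
  | succ n ihn =>
    rw [Function.iterate_succ_apply, ihn]
    show f^[((i : ℕ) + 1) * n] (f^[(i : ℕ) + 1] (x i)) = _
    rw [← Function.iterate_add_apply, show ((i:ℕ)+1) * n + ((i:ℕ)+1) = ((i:ℕ)+1) * (n+1) by ring]

lemma synTrans_topTrans {X : Type*} [TopologicalSpace X] {g : X → X}
    (h : SyndeticallyTransitive g) : TopTransitive g := by
  intro U V hU hV hUn hVn
  obtain ⟨L, _, hs⟩ := h U V hU hV hUn hVn
  obtain ⟨k, hk, _, _⟩ := hs 0
  exact ⟨k, hk.1, hk.2⟩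

section Main

variable {X : Type*} [MetricSpace X] [CompactSpace X] {f : X → X}
  (hf : Continuous f) (hwm : WeaklyMixing f) (hsyn : SyndeticallyTransitive f)

include hf hsyn in
lemma f_surj (hX : Nonempty X) : Surjective f := by
  intro y
  by_contra hy
  have hcl : IsClosed (range f) := (isCompact_range hf).isClosed
  obtain ⟨n, hn, z, ⟨x, _, rfl⟩, hz⟩ :=
    synTrans_topTrans hsyn univ (range f)ᶜ isOpen_univ hcl.isOpen_compl ⟨y, trivial⟩
      ⟨y, fun hr => hy hr⟩
  obtain ⟨k, rfl⟩ := Nat.exists_eq_succ_of_ne_zero hn.ne'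
  exact hz ⟨f^[k] x, (Function.iterate_succ_apply' f k x).symm⟩

include hwm in
lemma wm_pair {U₁ V₁ U₂ V₂ : Set X} (hU₁ : IsOpen U₁) (hV₁ : IsOpen V₁)
    (hU₂ : IsOpen U₂) (hV₂ : IsOpen V₂) (hU₁n : U₁.Nonempty) (hV₁n : V₁.Nonempty)
    (hU₂n : U₂.Nonempty) (hV₂n : V₂.Nonempty) :
    ∃ n, 0 < n ∧ (U₁ ∩ f^[n] ⁻¹' U₂).Nonempty ∧ (V₁ ∩ f^[n] ⁻¹' V₂).Nonempty := by
  obtain ⟨n, hn, p, ⟨q, hq, hpq⟩, hp⟩ :=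
    hwm (U₁ ×ˢ V₁) (U₂ ×ˢ V₂) (hU₁.prod hV₁) (hU₂.prod hV₂) (hU₁n.prod hV₁n) (hU₂n.prod hV₂n)
  rw [prod_map_iterate] at hpq
  subst hpq
  exact ⟨n, hn, ⟨q.1, hq.1, hp.1⟩, ⟨q.2, hq.2, hp.2⟩⟩

include hf hwm in
lemma nset_filter {U₁ V₁ U₂ V₂ : Set X} (hU₁ : IsOpen U₁) (hV₁ : IsOpen V₁)
    (hU₂ : IsOpen U₂) (hV₂ : IsOpen V₂) (hU₁n : U₁.Nonempty) (hV₁n : V₁.Nonempty)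
    (hU₂n : U₂.Nonempty) (hV₂n : V₂.Nonempty) :
    ∃ U V : Set X, IsOpen U ∧ IsOpen V ∧ U.Nonempty ∧ V.Nonempty ∧
      NSet f U V ⊆ NSet f U₁ V₁ ∩ NSet f U₂ V₂ := by
  obtain ⟨n, hn, hUne, hVne⟩ := wm_pair hwm hU₁ hV₁ hU₂ hV₂ hU₁n hV₁n hU₂n hV₂n
  refine ⟨U₁ ∩ f^[n] ⁻¹' U₂, V₁ ∩ f^[n] ⁻¹' V₂,
    hU₁.inter ((hf.iterate n).isOpen_preimage _ hU₂),
    hV₁.inter ((hf.iterate n).isOpen_preimage _ hV₂), hUne, hVne, ?_⟩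
  rintro m ⟨hm, y, ⟨x, ⟨hx1, hx2⟩, rfl⟩, hy1, hy2⟩
  refine ⟨⟨hm, f^[m] x, ⟨x, hx1, rfl⟩, hy1⟩, hm, f^[m] (f^[n] x), ⟨f^[n] x, hx2, rfl⟩, ?_⟩
  rw [← Function.iterate_add_apply, Nat.add_comm, Function.iterate_add_apply]
  exact hy2

include hf hwm in
lemma nset_filter_fin : ∀ (k : ℕ) (Us Vs : ℕ → Set X),
    (∀ j ≤ k, IsOpen (Us j) ∧ IsOpen (Vs j) ∧ (Us j).Nonempty ∧ (Vs j).Nonempty) →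
    ∃ U V : Set X, IsOpen U ∧ IsOpen V ∧ U.Nonempty ∧ V.Nonempty ∧
      ∀ j ≤ k, NSet f U V ⊆ NSet f (Us j) (Vs j) := by
  intro k
  induction k with
  | zero =>
    intro Us Vs h
    obtain ⟨h1, h2, h3, h4⟩ := h 0 le_rfl
    exact ⟨Us 0, Vs 0, h1, h2, h3, h4, fun j hj => by
      interval_cases j
      exact fun n hn => hn⟩
  | succ k ih =>
    intro Us Vs h
    obtain ⟨U, V, hU, hV, hUn, hVn, hsub⟩ := ih Us Vs (fun j hj => h j (by omega))
    obtain ⟨h1, h2, h3, h4⟩ := h (k + 1) le_rfl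
    obtain ⟨U', V', hU', hV', hU'n, hV'n, hsub'⟩ :=
      nset_filter hf hwm hU hV h1 h2 hUn hVn h3 h4
    refine ⟨U', V', hU', hV', hU'n, hV'n, fun j hj n hn => ?_⟩
    rcases Nat.lt_succ_iff_lt_or_eq.mp (Nat.lt_succ_of_le hj) with hj' | rfl
    · exact hsub j (by omega) (hsub' hn).1
    · exact (hsub' hn).2

include hf hwm hsyn in
lemma nset_ts {U V : Set X} (hU : IsOpen U) (hV : IsOpen V)
    (hUn : U.Nonempty) (hVn : V.Nonempty) : ThicklySyndetic (NSet f U V) := by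
  intro k
  have hX : Nonempty X := ⟨hUn.some⟩
  have hsurj : Surjective f := f_surj hf hsyn hX
  have props : ∀ j ≤ k, IsOpen U ∧ IsOpen (f^[j] ⁻¹' V) ∧ U.Nonempty ∧
      (f^[j] ⁻¹' V).Nonempty := by
    intro j _
    obtain ⟨v, hv⟩ := hVn
    obtain ⟨w, hw⟩ := (hsurj.iterate j) v
    exact ⟨hU, (hf.iterate j).isOpen_preimage _ hV, hUn, ⟨w, by simp [Set.mem_preimage, hw, hv]⟩⟩
  obtain ⟨U', V', hU', hV', hU'n, hV'n, hsub⟩ :=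
    nset_filter_fin hf hwm k (fun _ => U) (fun j => f^[j] ⁻¹' V) props
  refine syndetic_mono ?_ (hsyn U' V' hU' hV' hU'n hV'n)
  intro n hn j hj
  obtain ⟨hpos, y, ⟨x, hx, rfl⟩, hy⟩ := hsub j hj hn
  refine ⟨by omega, f^[n + j] x, ⟨x, hx, rfl⟩, ?_⟩
  rw [Nat.add_comm, Function.iterate_add_apply]
  exact hy

include hf hwm hsyn in
lemma star_ts {m : ℕ} (U V : Fin m → Set X)
    (hU : ∀ i, IsOpen (U i)) (hV : ∀ i, IsOpen (V i))
    (hUn : ∀ i, (U i).Nonempty) (hVn : ∀ i, (V i).Nonempty) :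
    ThicklySyndetic {n | ∀ i : Fin m, ((i : ℕ) + 1) * n ∈ NSet f (U i) (V i)} := by
  have he : {n | ∀ i : Fin m, ((i : ℕ) + 1) * n ∈ NSet f (U i) (V i)} =
      ⋂ i : Fin m, {n | ((i : ℕ) + 1) * n ∈ NSet f (U i) (V i)} := by
    ext n; simp [Set.mem_iInter]
  rw [he]
  exact ts_iInter m _ fun i =>
    (nset_ts hf hwm hsyn (hU i) (hV i) (hUn i) (hVn i)).dilate (Nat.succ_pos _)

lemma box_reduce {m : ℕ} {W : Set (Fin m → X)} (hW : IsOpen W) (hWn : W.Nonempty) :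
    ∃ U : Fin m → Set X, (∀ i, IsOpen (U i)) ∧ (∀ i, (U i).Nonempty) ∧
      Set.pi Set.univ U ⊆ W := by
  classical
  obtain ⟨x, hx⟩ := hWn
  obtain ⟨I, u, hu, hsub⟩ := isOpen_pi_iff.mp hW x hx
  refine ⟨fun i => if i ∈ I then u i else Set.univ, ?_, ?_, ?_⟩
  · intro i
    by_cases hi : i ∈ I
    · simpa [hi] using (hu i hi).1
    · simp [hi]
  · intro i
    by_cases hi : i ∈ I
    · exact ⟨x i, by simpa [hi] using (hu i hi).2⟩
    · exact ⟨x i, by simp [hi]⟩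
  · intro y hy
    apply hsub
    intro i hi
    have h2 := hy i trivial
    simpa only [if_pos (Finset.mem_coe.mp hi)] using h2

include hf hwm hsyn in
lemma star_syn (m : ℕ) (hm : 1 ≤ m) : SyndeticallyTransitive (starMap f m) := by
  intro UU VV hUU hVV hUUn hVVn
  obtain ⟨U, hUo, hUn, hUsub⟩ := box_reduce hUU hUUn
  obtain ⟨V, hVo, hVn, hVsub⟩ := box_reduce hVV hVVn
  have hTS := star_ts hf hwm hsyn U V hUo hVo hUn hVn
  refine syndetic_mono ?_ hTS.syndetic
  intro n hn
  have hpos : 0 < n := by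
    have h0 := (hn ⟨0, hm⟩).1
    rcases Nat.eq_zero_or_pos n with rfl | h
    · simp at h0
    · exact h
  have key : ∀ i : Fin m, ∃ xi ∈ U i, f^[((i : ℕ) + 1) * n] xi ∈ V i := by
    intro i
    obtain ⟨y, ⟨xi, hxi, rfl⟩, hyV⟩ := (hn i).2
    exact ⟨xi, hxi, hyV⟩
  choose x hxU hxV using key
  refine ⟨hpos, (starMap f m)^[n] x, ⟨x, hUsub (fun i _ => hxU i), rfl⟩, hVsub ?_⟩
  intro i _
  rw [starMap_iterate]
  exact hxV i

include hf hwm hsyn in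
lemma star_wm (m : ℕ) (hm : 1 ≤ m) : WeaklyMixing (starMap f m) := by
  intro A B hA hB hAn hBn
  obtain ⟨⟨a, b⟩, hab⟩ := hAn
  obtain ⟨⟨c, d⟩, hcd⟩ := hBn
  obtain ⟨A₁, A₂, hA₁, hA₂, haA, hbA, hsubA⟩ := isOpen_prod_iff.mp hA a b hab
  obtain ⟨B₁, B₂, hB₁, hB₂, hcB, hdB, hsubB⟩ := isOpen_prod_iff.mp hB c d hcd
  obtain ⟨U1, hU1o, hU1n, hU1sub⟩ := box_reduce hA₁ ⟨a, haA⟩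
  obtain ⟨U2, hU2o, hU2n, hU2sub⟩ := box_reduce hA₂ ⟨b, hbA⟩
  obtain ⟨V1, hV1o, hV1n, hV1sub⟩ := box_reduce hB₁ ⟨c, hcB⟩
  obtain ⟨V2, hV2o, hV2n, hV2sub⟩ := box_reduce hB₂ ⟨d, hdB⟩
  have hTS := (star_ts hf hwm hsyn U1 V1 hU1o hV1o hU1n hV1n).inter
    (star_ts hf hwm hsyn U2 V2 hU2o hV2o hU2n hV2n)
  obtain ⟨L, _, hs⟩ := hTS.syndetic
  obtain ⟨n, ⟨hn1, hn2⟩, _, _⟩ := hs 0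
  have hpos : 0 < n := by
    have h0 := (hn1 ⟨0, hm⟩).1
    rcases Nat.eq_zero_or_pos n with rfl | h
    · simp at h0
    · exact h
  have key1 : ∀ i : Fin m, ∃ xi ∈ U1 i, f^[((i : ℕ) + 1) * n] xi ∈ V1 i := by
    intro i
    obtain ⟨y, ⟨xi, hxi, rfl⟩, hyV⟩ := (hn1 i).2
    exact ⟨xi, hxi, hyV⟩
  have key2 : ∀ i : Fin m, ∃ xi ∈ U2 i, f^[((i : ℕ) + 1) * n] xi ∈ V2 i := by
    intro i
    obtain ⟨y, ⟨xi, hxi, rfl⟩, hyV⟩ := (hn2 i).2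
    exact ⟨xi, hxi, hyV⟩
  choose x hxU hxV using key1
  choose y hyU hyV using key2
  have hmem1 : (starMap f m)^[n] x ∈ B₁ :=
    hV1sub (fun i _ => by rw [starMap_iterate]; exact hxV i)
  have hmem2 : (starMap f m)^[n] y ∈ B₂ :=
    hV2sub (fun i _ => by rw [starMap_iterate]; exact hyV i)
  refine ⟨n, hpos, ?_⟩
  refine ⟨(fun p : (Fin m → X) × (Fin m → X) =>
      ((starMap f m) p.1, (starMap f m) p.2))^[n] (x, y),
    ⟨(x, y), hsubA ⟨hU1sub (fun i _ => hxU i), hU2sub (fun i _ => hyU i)⟩, rfl⟩, ?_⟩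
  rw [prod_map_iterate]
  exact hsubB ⟨hmem1, hmem2⟩

end Main

end Statement1Aux

/-- If `f` is weakly mixing and syndetically transitive, then every
`f^{(∗m)} = f × f² × ⋯ × f^m` is weakly mixing and syndetically transitive; in particular
`f` is multi-transitive. -/
theorem statement1 {X : Type*} [MetricSpace X] [CompactSpace X] (f : X → X)
    (hf : Continuous f) (hwm : WeaklyMixing f) (hsyn : SyndeticallyTransitive f) :
    (∀ m : ℕ, 1 ≤ m →
      WeaklyMixing (starMap f m) ∧ SyndeticallyTransitive (starMap f m)) ∧
    MultiTransitive f := by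
  refine ⟨fun m hm => ⟨Statement1Aux.star_wm hf hwm hsyn m hm,
    Statement1Aux.star_syn hf hwm hsyn m hm⟩,
    fun m hm => Statement1Aux.synTrans_topTrans (Statement1Aux.star_syn hf hwm hsyn m hm)⟩
end

section
/- Let X be a compact metric space. If f : X → X is a weakly mixing and minimal continuous map, then f is Δ-transitive; equivalently, for every positive integer m and all nonempty open sets U, V₁, …, V_m ⊆ X there exists n ≥ 1 such that U ∩ f⁻ⁿ(V₁) ∩ f⁻²ⁿ(V₂) ∩ … ∩ f⁻ᵐⁿ(V_m) ≠ ∅. -/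
open Set Function

namespace St4

set_option linter.unusedSectionVars false


/-- "Syndetic with a bound": every window `[t, t+G]` meets `S`. -/
def Syn (S : Set ℕ) : Prop := ∃ G : ℕ, ∀ t : ℕ, ∃ s, t ≤ s ∧ s ≤ t + G ∧ s ∈ S

/-- Thickly syndetic. -/
def TS (S : Set ℕ) : Prop := ∀ L : ℕ, Syn {s | ∀ j ≤ L, s + j ∈ S}

lemma Syn.mono {S T : Set ℕ} (h : S ⊆ T) (hS : Syn S) : Syn T := by
  obtain ⟨G, hG⟩ := hS
  exact ⟨G, fun t => by obtain ⟨s, h1, h2, h3⟩ := hG t; exact ⟨s, h1, h2, h h3⟩⟩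

lemma TS.mono {S T : Set ℕ} (h : S ⊆ T) (hS : TS S) : TS T := by
  intro L
  refine (hS L).mono ?_
  intro s hs j hj
  exact h (hs j hj)

lemma TS.syn {S : Set ℕ} (hS : TS S) : Syn S := by
  have := hS 0
  exact this.mono (fun s hs => by simpa using hs 0 (le_refl 0))

lemma TS.exists_ge {S : Set ℕ} (hS : TS S) (a : ℕ) : ∃ s, a ≤ s ∧ s ∈ S := by
  obtain ⟨G, hG⟩ := hS.syn
  obtain ⟨s, h1, _, h3⟩ := hG a
  exact ⟨s, h1, h3⟩

lemma TS.inter {S T : Set ℕ} (hS : TS S) (hT : TS T) : TS (S ∩ T) := by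
  intro L
  obtain ⟨GT, hGT⟩ := hT L
  obtain ⟨GS, hGS⟩ := hS (L + GT)
  refine ⟨GS + GT, fun t => ?_⟩
  obtain ⟨b, htb, hbG, hb⟩ := hGS t
  obtain ⟨c, hbc, hcG, hc⟩ := hGT b
  refine ⟨c, by omega, by omega, fun j hj => ⟨?_, hc j hj⟩⟩
  have he : c + j = b + (c - b + j) := by omega
  rw [he]; exact hb _ (by omega)

lemma TS.univ : TS (Set.univ : Set ℕ) := by
  intro L
  exact ⟨0, fun t => ⟨t, le_rfl, by omega, fun j _ => mem_univ _⟩⟩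

lemma TS.dilate {S : Set ℕ} (hS : TS S) {k : ℕ} (hk : 1 ≤ k) : TS {n | k * n ∈ S} := by
  intro L
  obtain ⟨G, hG⟩ := hS (k * L + k)
  refine ⟨G + 1, fun t => ?_⟩
  obtain ⟨b, htb, hbG, hb⟩ := hG (k * t)
  have hdm := Nat.div_add_mod b k
  have hml : b % k < k := Nat.mod_lt b (by omega)
  refine ⟨b / k + 1, ?_, ?_, fun j hj => ?_⟩
  · -- t ≤ b/k + 1
    have h0 : t * k ≤ b := by
      have : t * k = k * t := Nat.mul_comm t k
      omega
    have : t ≤ b / k := (Nat.le_div_iff_mul_le (by omega)).mpr h0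
    omega
  · -- b/k + 1 ≤ t + (G+1)
    have h1 : b / k ≤ (k * t + G) / k := Nat.div_le_div_right hbG
    have h2 : (k * t + G) / k = t + G / k := by
      rw [Nat.mul_comm k t, Nat.add_comm (t * k) G, Nat.add_mul_div_right _ _ (by omega : 0 < k)]
      omega
    have h3 : G / k ≤ G := Nat.div_le_self _ _
    omega
  · show k * (b / k + 1 + j) ∈ S
    have hkj : k * j ≤ k * L := Nat.mul_le_mul_left k hj
    have hexp : k * (b / k + 1 + j) = k * (b/k) + k + k * j := by ring
    have hge : b ≤ k * (b / k + 1 + j) := by omega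
    have hle : k * (b / k + 1 + j) ≤ b + (k * L + k) := by omega
    have he : k * (b / k + 1 + j) = b + (k * (b / k + 1 + j) - b) := by omega
    rw [he]; exact hb _ (by omega)

lemma TS.iInter_fin : ∀ {m : ℕ} (S : Fin m → Set ℕ), (∀ i, TS (S i)) → TS (⋂ i, S i) := by
  intro m
  induction m with
  | zero =>
    intro S _
    have he : (⋂ i : Fin 0, S i) = Set.univ := by
      ext n; simp
    rw [he]; exact TS.univ
  | succ m ih =>
    intro S hS
    have he : (⋂ i : Fin (m+1), S i) = S 0 ∩ ⋂ j : Fin m, S j.succ := by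
      ext n
      simp only [mem_iInter, mem_inter_iff]
      exact Fin.forall_fin_succ
    rw [he]
    exact (hS 0).inter (ih _ (fun j => hS _))


variable {X : Type*} [MetricSpace X] [CompactSpace X]

/-- Return-time set, preimage form. -/
def NN (f : X → X) (A B : Set X) : Set ℕ := {n | 1 ≤ n ∧ (A ∩ f^[n] ⁻¹' B).Nonempty}

lemma NN_mono {f : X → X} {A B A' B' : Set X} (hA : A' ⊆ A) (hB : B' ⊆ B) :
    NN f A' B' ⊆ NN f A B := by
  rintro n ⟨hn, x, hxA, hxB⟩
  exact ⟨hn, x, hA hxA, hB hxB⟩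

variable {f : X → X}

lemma minimal_surj (hf : Continuous f) (hmin : MinimalMap f) : Surjective f := by
  cases isEmpty_or_nonempty X with
  | inl h => exact fun y => isEmptyElim y
  | inr h =>
    have hK : IsCompact (range f) := isCompact_range hf
    have := hmin (range f) hK.isClosed (range_nonempty f)
      (by rintro _ ⟨x, hx, rfl⟩; exact mem_range_self x)
    intro y
    have : y ∈ range f := this ▸ mem_univ y
    exact this

/-- Every forward orbit hits every nonempty open set. -/
lemma orbit_hits (hf : Continuous f) (hmin : MinimalMap f) (x : X) {U : Set X}
    (hU : IsOpen U) (hUne : U.Nonempty) : ∃ n : ℕ, f^[n] x ∈ U := by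
  by_contra hcon
  push_neg at hcon
  set R : Set X := range fun n : ℕ => f^[n] x with hR
  have hsub : f '' R ⊆ R := by
    rintro _ ⟨_, ⟨n, rfl⟩, rfl⟩
    exact ⟨n + 1, by simp [Function.iterate_succ_apply']⟩
  have hinv : f '' closure R ⊆ closure R :=
    (image_closure_subset_closure_image hf).trans (closure_mono hsub)
  have hne : (closure R).Nonempty := ⟨x, subset_closure ⟨0, rfl⟩⟩
  have huniv := hmin (closure R) isClosed_closure hne hinv
  obtain ⟨u, hu⟩ := hUne
  have huK : u ∈ closure R := huniv ▸ mem_univ u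
  obtain ⟨y, hyU, hyR⟩ := mem_closure_iff.mp huK U hU hu
  obtain ⟨n, rfl⟩ := hyR
  exact hcon n hyU

/-- Uniform covering time: every orbit enters `B` within `M` steps (from any start). -/
lemma cover (hf : Continuous f) (hmin : MinimalMap f) [Nonempty X] {B : Set X}
    (hB : IsOpen B) (hBne : B.Nonempty) :
    ∃ M : ℕ, ∀ x : X, ∃ j, 1 ≤ j ∧ j ≤ M ∧ f^[j] x ∈ B := by
  have hsurj := minimal_surj hf hmin
  have hE : (⋃ j : ℕ, f^[j+1] ⁻¹' B) = univ := by
    by_contra hne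
    set K := (⋃ j : ℕ, f^[j+1] ⁻¹' B)ᶜ with hK
    have hKclosed : IsClosed K :=
      (isOpen_iUnion fun j => hB.preimage (hf.iterate _)).isClosed_compl
    have hKne : K.Nonempty := nonempty_compl.mpr hne
    have hKinv : f '' K ⊆ K := by
      rintro _ ⟨x, hx, rfl⟩
      intro hy
      obtain ⟨s, ⟨j, rfl⟩, hj⟩ := hy
      apply hx
      refine mem_iUnion.mpr ⟨j + 1, ?_⟩
      show f^[j+1+1] x ∈ B
      rw [Function.iterate_succ_apply]
      exact hj
    have huniv := hmin K hKclosed hKne hKinv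
    obtain ⟨b, hb⟩ := hBne
    obtain ⟨a, rfl⟩ := hsurj b
    have haK : a ∈ K := huniv ▸ mem_univ a
    exact haK (mem_iUnion.mpr ⟨0, by simpa using hb⟩)
  obtain ⟨t, ht⟩ := isCompact_univ.elim_finite_subcover (fun j : ℕ => f^[j+1] ⁻¹' B)
    (fun j => hB.preimage (hf.iterate _)) (hE ▸ subset_rfl)
  refine ⟨t.sup id + 1, fun x => ?_⟩
  obtain ⟨j, hjt, hj⟩ := mem_iUnion₂.mp (ht (mem_univ x))
  exact ⟨j + 1, by omega, by have := Finset.le_sup (f := id) hjt; simp at this; omega, hj⟩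

/-- `NN f A B` is syndetic, with constant depending only on `B`. -/
lemma NN_syn (hf : Continuous f) (hmin : MinimalMap f) [Nonempty X] {A B : Set X}
    (hAne : A.Nonempty) (hB : IsOpen B) (hBne : B.Nonempty) : Syn (NN f A B) := by
  obtain ⟨M, hM⟩ := cover hf hmin hB hBne
  obtain ⟨a, ha⟩ := hAne
  refine ⟨M, fun t => ?_⟩
  obtain ⟨j, hj1, hjM, hjB⟩ := hM (f^[t] a)
  refine ⟨t + j, by omega, by omega, by omega, a, ha, ?_⟩
  show f^[t + j] a ∈ B
  rw [add_comm, Function.iterate_add_apply]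
  exact hjB


lemma prodMap_iterate (f : X → X) (n : ℕ) (p : X × X) :
    (fun q : X × X => (f q.1, f q.2))^[n] p = (f^[n] p.1, f^[n] p.2) := by
  induction n generalizing p with
  | zero => rfl
  | succ n ih =>
    rw [Function.iterate_succ_apply, ih]
    simp [Function.iterate_succ_apply]


variable {X : Type*} [MetricSpace X] [CompactSpace X] {f : X → X}

/-- `f` itself is transitive. -/
lemma f_trans (hwm : WeaklyMixing f) [Nonempty X] {U V : Set X} (hU : IsOpen U)
    (hUne : U.Nonempty) (hV : IsOpen V) (hVne : V.Nonempty) :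
    ∃ n, 1 ≤ n ∧ (U ∩ f^[n] ⁻¹' V).Nonempty := by
  obtain ⟨n, hn, q, ⟨p, hp, hq⟩, hqV⟩ := hwm (U ×ˢ univ) (V ×ˢ univ)
    (hU.prod isOpen_univ) (hV.prod isOpen_univ)
    (hUne.prod univ_nonempty) (hVne.prod univ_nonempty)
  rw [prodMap_iterate] at hq
  refine ⟨n, hn, p.1, hp.1, ?_⟩
  have h1 : q.1 = f^[n] p.1 := by rw [← hq]
  show f^[n] p.1 ∈ V
  rw [← h1]
  exact hqV.1

/-- Weak mixing shrink lemma (Furstenberg's trick). -/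
lemma lemF (hf : Continuous f) (hwm : WeaklyMixing f) [Nonempty X] {A B C D : Set X}
    (hA : IsOpen A) (hAne : A.Nonempty) (hB : IsOpen B) (hBne : B.Nonempty)
    (hC : IsOpen C) (hCne : C.Nonempty) (hD : IsOpen D) (hDne : D.Nonempty) :
    ∃ A' B' : Set X, IsOpen A' ∧ A'.Nonempty ∧ A' ⊆ A ∧ IsOpen B' ∧ B'.Nonempty ∧ B' ⊆ B ∧
      NN f A' B' ⊆ NN f C D := by
  obtain ⟨n₀, hn₀, q, ⟨p, ⟨hpA, hpB⟩, hq⟩, hqC, hqD⟩ := hwm (A ×ˢ B) (C ×ˢ D)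
    (hA.prod hB) (hC.prod hD) (hAne.prod hBne) (hCne.prod hDne)
  rw [prodMap_iterate] at hq
  have h1 : q.1 = f^[n₀] p.1 := by rw [← hq]
  have h2 : q.2 = f^[n₀] p.2 := by rw [← hq]
  refine ⟨A ∩ f^[n₀] ⁻¹' C, B ∩ f^[n₀] ⁻¹' D,
    hA.inter (hC.preimage (hf.iterate _)), ⟨p.1, hpA, by rw [mem_preimage, ← h1]; exact hqC⟩,
    inter_subset_left,
    hB.inter (hD.preimage (hf.iterate _)), ⟨p.2, hpB, by rw [mem_preimage, ← h2]; exact hqD⟩,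
    inter_subset_left, ?_⟩
  rintro k ⟨hk1, x, ⟨hxA, hxC⟩, hxB'⟩
  have hxB'' : f^[k] x ∈ B ∩ f^[n₀] ⁻¹' D := hxB'
  refine ⟨hk1, f^[n₀] x, hxC, ?_⟩
  show f^[k] (f^[n₀] x) ∈ D
  rw [← Function.iterate_add_apply, add_comm, Function.iterate_add_apply]
  exact hxB''.2

/-- Iterated shrink lemma over a list of target pairs. -/
lemma lemF_list (hf : Continuous f) (hwm : WeaklyMixing f) [Nonempty X] :
    ∀ (l : List (Set X × Set X)),
      (∀ p ∈ l, IsOpen p.1 ∧ p.1.Nonempty ∧ IsOpen p.2 ∧ p.2.Nonempty) →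
      ∀ A B : Set X, IsOpen A → A.Nonempty → IsOpen B → B.Nonempty →
      ∃ A' B' : Set X, IsOpen A' ∧ A'.Nonempty ∧ A' ⊆ A ∧ IsOpen B' ∧ B'.Nonempty ∧ B' ⊆ B ∧
        ∀ p ∈ l, NN f A' B' ⊆ NN f p.1 p.2 := by
  intro l
  induction l with
  | nil =>
    intro _ A B hA hAne hB hBne
    exact ⟨A, B, hA, hAne, subset_rfl, hB, hBne, subset_rfl, fun p hp => absurd hp (by simp)⟩
  | cons p l ihl =>
    intro hl A B hA hAne hB hBne
    obtain ⟨A₁, B₁, hA₁, hA₁ne, hA₁sub, hB₁, hB₁ne, hB₁sub, h₁⟩ :=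
      ihl (fun q hq => hl q (List.mem_cons_of_mem p hq)) A B hA hAne hB hBne
    obtain ⟨hp1, hp1ne, hp2, hp2ne⟩ := hl p List.mem_cons_self
    obtain ⟨A', B', hA', hA'ne, hA'sub, hB', hB'ne, hB'sub, h'⟩ :=
      lemF hf hwm hA₁ hA₁ne hB₁ hB₁ne hp1 hp1ne hp2 hp2ne
    refine ⟨A', B', hA', hA'ne, hA'sub.trans hA₁sub, hB', hB'ne, hB'sub.trans hB₁sub, ?_⟩
    intro q hq
    rcases List.mem_cons.mp hq with h | h
    · rw [h]; exact h'
    · exact (NN_mono hA'sub hB'sub).trans (h₁ q h)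

/-- `NN f A B` is thickly syndetic. -/
lemma NN_TS (hf : Continuous f) (hmin : MinimalMap f) (hwm : WeaklyMixing f) [Nonempty X]
    {A B : Set X} (hA : IsOpen A) (hAne : A.Nonempty) (hB : IsOpen B) (hBne : B.Nonempty) :
    TS (NN f A B) := by
  have hsurj := minimal_surj hf hmin
  intro L
  set l : List (Set X × Set X) := (List.range (L+1)).map (fun j => (A, f^[j] ⁻¹' B)) with hl
  have hlh : ∀ p ∈ l, IsOpen p.1 ∧ p.1.Nonempty ∧ IsOpen p.2 ∧ p.2.Nonempty := by
    intro p hp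
    obtain ⟨j, _, rfl⟩ := List.mem_map.mp hp
    exact ⟨hA, hAne, hB.preimage (hf.iterate _), hBne.preimage (hsurj.iterate _)⟩
  obtain ⟨A', B', hA'o, hA'ne, hA'sub, hB'o, hB'ne, hB'sub, hincl⟩ :=
    lemF_list hf hwm l hlh A B hA hAne hB hBne
  obtain ⟨G, hG⟩ := NN_syn hf hmin hA'ne hB'o hB'ne
  refine ⟨G, fun t => ?_⟩
  obtain ⟨s, hts, hsG, hs⟩ := hG t
  refine ⟨s, hts, hsG, fun j hj => ?_⟩
  have hmem : s ∈ NN f A (f^[j] ⁻¹' B) :=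
    hincl (A, f^[j] ⁻¹' B) (List.mem_map.mpr ⟨j, List.mem_range.mpr (by omega), rfl⟩) hs
  obtain ⟨hs1, x, hxA, hx⟩ := hmem
  refine ⟨by omega, x, hxA, ?_⟩
  show f^[s + j] x ∈ B
  rw [add_comm, Function.iterate_add_apply]
  exact hx

/-- Multi-transitivity with independent witnesses. -/
lemma MT (hf : Continuous f) (hmin : MinimalMap f) (hwm : WeaklyMixing f) [Nonempty X]
    (m : ℕ) (A B : Fin m → Set X) (hA : ∀ i, IsOpen (A i)) (hAne : ∀ i, (A i).Nonempty)
    (hB : ∀ i, IsOpen (B i)) (hBne : ∀ i, (B i).Nonempty) :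
    ∃ n, 1 ≤ n ∧ ∀ i : Fin m, ((A i) ∩ f^[((i : ℕ) + 1) * n] ⁻¹' (B i)).Nonempty := by
  have hTS : ∀ i : Fin m, TS {n | ((i : ℕ) + 1) * n ∈ NN f (A i) (B i)} := fun i =>
    (NN_TS hf hmin hwm (hA i) (hAne i) (hB i) (hBne i)).dilate (by omega)
  obtain ⟨n, hn1, hn⟩ := (TS.iInter_fin _ hTS).exists_ge 1
  refine ⟨n, hn1, fun i => ?_⟩
  have := mem_iInter.mp hn i
  exact this.2


lemma starMap_iterate (f : X → X) (m n : ℕ) (ξ : Fin m → X) (i : Fin m) :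
    (starMap f m)^[n] ξ i = f^[((i : ℕ) + 1) * n] (ξ i) := by
  induction n generalizing ξ with
  | zero => simp
  | succ n ih =>
    rw [Function.iterate_succ_apply, ih]
    show f^[((i : ℕ) + 1) * n] (f^[(i : ℕ) + 1] (ξ i)) = _
    rw [← Function.iterate_add_apply]
    congr 1

lemma open_pi_reduce {m : ℕ} {O : Set (Fin m → X)} (hO : IsOpen O) {ξ : Fin m → X}
    (hξ : ξ ∈ O) :
    ∃ V : Fin m → Set X, (∀ i, IsOpen (V i)) ∧ (∀ i, (V i).Nonempty) ∧
      (∀ η : Fin m → X, (∀ i, η i ∈ V i) → η ∈ O) ∧ (∀ i, ξ i ∈ V i) := by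
  obtain ⟨ε, hε, hball⟩ := Metric.isOpen_iff.mp hO ξ hξ
  have hb := ball_pi ξ hε
  refine ⟨fun i => Metric.ball (ξ i) ε, fun i => Metric.isOpen_ball,
    fun i => ⟨ξ i, Metric.mem_ball_self hε⟩, fun η hη => hball ?_,
    fun i => Metric.mem_ball_self hε⟩
  rw [hb]
  exact fun i _ => hη i

lemma exists_trans_point (hf : Continuous f) (hmin : MinimalMap f) (hwm : WeaklyMixing f)
    [Nonempty X] (m : ℕ) :
    ∃ ξ : Fin m → X, Dense (Set.range fun n : ℕ => (starMap f m)^[n] ξ) := by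
  have hScont : Continuous (starMap f m) :=
    continuous_pi fun i => (hf.iterate _).comp (continuous_apply i)
  obtain ⟨b, hbc, hbne, hb⟩ := TopologicalSpace.exists_countable_basis (Fin m → X)
  have hcnt : Countable ↥b := hbc.to_subtype
  set D : ↥b → Set (Fin m → X) := fun B => ⋃ n : ℕ, (starMap f m)^[n] ⁻¹' (B : Set _) with hD
  have hDopen : ∀ B, IsOpen (D B) := fun B =>
    isOpen_iUnion fun n => (hb.isOpen B.2).preimage (hScont.iterate n)
  have hDdense : ∀ B, Dense (D B) := by
    intro B
    rw [dense_iff_inter_open]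
    rintro A hA ⟨a, ha⟩
    obtain ⟨VA, hVAo, hVAne, hVAsub, -⟩ := open_pi_reduce hA ha
    have hBne : (B : Set (Fin m → X)).Nonempty := by
      rcases eq_empty_or_nonempty (B : Set (Fin m → X)) with h | h
      · exact absurd (h ▸ B.2) hbne
      · exact h
    obtain ⟨β, hβ⟩ := hBne
    obtain ⟨VB, hVBo, hVBne, hVBsub, -⟩ := open_pi_reduce (hb.isOpen B.2) hβ
    obtain ⟨n, hn1, hn⟩ := MT hf hmin hwm m VA VB hVAo hVAne hVBo hVBne
    choose x hx using hn
    refine ⟨x, hVAsub x (fun i => (hx i).1), mem_iUnion.mpr ⟨n, ?_⟩⟩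
    show (starMap f m)^[n] x ∈ (B : Set _)
    apply hVBsub
    intro i
    rw [starMap_iterate]
    exact (hx i).2
  have hY : Dense (⋂ B, D B) := dense_iInter_of_isOpen hDopen hDdense
  obtain ⟨ξ, hξ⟩ := hY.nonempty
  refine ⟨ξ, dense_iff_inter_open.mpr ?_⟩
  rintro O hO ⟨pt, hpt⟩
  obtain ⟨B, hBb, hptB, hBO⟩ := hb.exists_subset_of_mem_open hpt hO
  have hmemD : ξ ∈ D ⟨B, hBb⟩ := mem_iInter.mp hξ _
  obtain ⟨n, hn⟩ := mem_iUnion.mp hmemD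
  exact ⟨(starMap f m)^[n] ξ, hBO hn, mem_range_self n⟩

/-- The key statement: common-witness diagonal pattern. -/
lemma STAR (hf : Continuous f) (hmin : MinimalMap f) (hwm : WeaklyMixing f) [Nonempty X] :
    ∀ m : ℕ, ∀ (U : Set X) (V : Fin m → Set X), IsOpen U → U.Nonempty →
      (∀ i, IsOpen (V i)) → (∀ i, (V i).Nonempty) →
      ∃ n : ℕ, 1 ≤ n ∧ ∃ x ∈ U, ∀ i : Fin m, f^[((i : ℕ) + 1) * n] x ∈ V i := by
  have hsurj := minimal_surj hf hmin
  intro m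
  induction m with
  | zero =>
    intro U V hU hUne _ _
    obtain ⟨x, hx⟩ := hUne
    exact ⟨1, le_rfl, x, hx, fun i => i.elim0⟩
  | succ m ih =>
    intro U V hU hUne hV hVne
    set S := starMap f (m+1) with hSdef
    have hScont : Continuous S :=
      continuous_pi fun i => (hf.iterate _).comp (continuous_apply i)
    set tl : X → ℕ → (Fin (m+1) → X) := fun x n i => f^[((i : ℕ) + 1) * n] x with htl
    set G : Set (X × (Fin (m+1) → X)) := {q | ∃ x n, 1 ≤ n ∧ q = (x, tl x n)} with hGdef
    set Z := closure G with hZdef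
    -- tails are dense
    have tails : ∀ (O : Set (Fin (m+1) → X)), IsOpen O → O.Nonempty →
        ∃ x n, 1 ≤ n ∧ tl x n ∈ O := by
      intro O hO hOne
      obtain ⟨pt, hpt⟩ := hOne
      obtain ⟨W, hWo, hWne, hWsub, -⟩ := open_pi_reduce hO hpt
      obtain ⟨e, he1, y, hy0, hy⟩ := ih (W 0) (fun j => W j.succ) (hWo 0) (hWne 0)
        (fun j => hWo _) (fun j => hWne _)
      obtain ⟨x, hx⟩ := (hsurj.iterate e) y
      refine ⟨x, e, he1, hWsub _ ?_⟩
      intro i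
      refine Fin.cases ?_ (fun j => ?_) i
      · show f^[(((0 : Fin (m+1)) : ℕ) + 1) * e] x ∈ W 0
        have h0 : (((0 : Fin (m+1)) : ℕ) + 1) * e = e := by simp
        rw [h0, hx]
        exact hy0
      · show f^[(((j.succ : Fin (m+1)) : ℕ) + 1) * e] x ∈ W j.succ
        have hv : ((j.succ : Fin (m+1)) : ℕ) = (j : ℕ) + 1 := rfl
        have harith : (((j.succ : Fin (m+1)) : ℕ) + 1) * e = ((j : ℕ) + 1) * e + e := by
          rw [hv]; ring
        rw [harith, Function.iterate_add_apply, hx]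
        exact hy j
    obtain ⟨ξ, hξ⟩ := exists_trans_point hf hmin hwm (m+1)
    have hZclosed : IsClosed Z := isClosed_closure
    have hZcomp : IsCompact Z := hZclosed.isCompact
    -- seed: some (x₀, ξ) in Z
    obtain ⟨x₀, hx₀⟩ : ∃ x₀, (x₀, ξ) ∈ Z := by
      have hclosed : IsClosed (Prod.snd '' Z) := (hZcomp.image continuous_snd).isClosed
      have hsub : closure (Prod.snd '' G) ⊆ Prod.snd '' Z :=
        hclosed.closure_subset_iff.mpr (image_mono subset_closure)
      have hmem : ξ ∈ closure (Prod.snd '' G) := by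
        rw [mem_closure_iff]
        intro O hO hξO
        obtain ⟨x, n, hn, hxO⟩ := tails O hO ⟨ξ, hξO⟩
        exact ⟨tl x n, hxO, (x, tl x n), ⟨x, n, hn, rfl⟩, rfl⟩
      obtain ⟨q, hqZ, hq⟩ := hsub hmem
      refine ⟨q.1, ?_⟩
      rw [← hq, Prod.mk.eta]
      exact hqZ
    -- GG := id × S preserves Z
    set GG : X × (Fin (m+1) → X) → X × (Fin (m+1) → X) := fun q => (q.1, S q.2) with hGG
    have hGGcont : Continuous GG := continuous_fst.prodMk (hScont.comp continuous_snd)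
    have hGGG : ∀ q ∈ G, GG q ∈ G := by
      rintro _ ⟨x, n, hn, rfl⟩
      refine ⟨x, n + 1, by omega, ?_⟩
      show (x, S (tl x n)) = (x, tl x (n+1))
      have hst : S (tl x n) = tl x (n+1) := by
        funext i
        show f^[(i : ℕ) + 1] (f^[((i : ℕ) + 1) * n] x) = f^[((i : ℕ) + 1) * (n+1)] x
        rw [← Function.iterate_add_apply]
        congr 1
        ring
      rw [hst]
    have hGGZ : ∀ q ∈ Z, GG q ∈ Z := by
      intro q hq
      have h2 : GG '' Z ⊆ closure (GG '' G) := image_closure_subset_closure_image hGGcont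
      have h3 : closure (GG '' G) ⊆ Z := by
        apply closure_mono
        rintro _ ⟨r, hr, rfl⟩
        exact hGGG r hr
      -- note: closure G = Z, and G ⊆ Z so closure (GG '' G) ⊆ closure G
      exact h3 (h2 (mem_image_of_mem _ hq))
    -- the whole fiber over x₀
    have hfiber : ∀ ζ : Fin (m+1) → X, (x₀, ζ) ∈ Z := by
      have horb : ∀ e : ℕ, (x₀, S^[e] ξ) ∈ Z := by
        intro e
        induction e with
        | zero => exact hx₀
        | succ e ihe =>
          rw [Function.iterate_succ_apply']
          exact hGGZ _ ihe
      intro ζ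
      have hcl : IsClosed {η : Fin (m+1) → X | (x₀, η) ∈ Z} :=
        hZclosed.preimage (continuous_const.prodMk continuous_id)
      have hrange : Set.range (fun e : ℕ => S^[e] ξ) ⊆ {η | (x₀, η) ∈ Z} := by
        rintro _ ⟨e, rfl⟩
        exact horb e
      exact hcl.closure_subset_iff.mpr hrange (hξ ζ)
    -- g := f × (f,…,f) preserves Z
    set g : X × (Fin (m+1) → X) → X × (Fin (m+1) → X) :=
      fun q => (f q.1, fun i => f (q.2 i)) with hg
    have hgcont : Continuous g := (hf.comp continuous_fst).prodMk
      (continuous_pi fun i => hf.comp ((continuous_apply i).comp continuous_snd))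
    have hgG : ∀ q ∈ G, g q ∈ G := by
      rintro _ ⟨x, n, hn, rfl⟩
      refine ⟨f x, n, hn, ?_⟩
      show (f x, fun i => f (tl x n i)) = (f x, tl (f x) n)
      have hc : (fun i => f (tl x n i)) = tl (f x) n := by
        funext i
        show f (f^[((i : ℕ) + 1) * n] x) = f^[((i : ℕ) + 1) * n] (f x)
        rw [← Function.iterate_succ_apply' f, Function.iterate_succ_apply]
      rw [hc]
    have hgZ : ∀ q ∈ Z, g q ∈ Z := by
      intro q hq
      have h2 : g '' Z ⊆ closure (g '' G) := image_closure_subset_closure_image hgcont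
      have h3 : closure (g '' G) ⊆ Z := by
        apply closure_mono
        rintro _ ⟨r, hr, rfl⟩
        exact hgG r hr
      exact h3 (h2 (mem_image_of_mem _ hq))
    -- every (f^[t] x₀, ζ) is in Z
    have hall : ∀ t : ℕ, ∀ ζ, (f^[t] x₀, ζ) ∈ Z := by
      intro t
      induction t with
      | zero => exact hfiber
      | succ t iht =>
        intro ζ
        choose ζ' hζ' using fun i => hsurj (ζ i)
        have hmem := hgZ _ (iht ζ')
        have heq : g (f^[t] x₀, ζ') = (f^[t+1] x₀, ζ) := by
          show (f (f^[t] x₀), fun i => f (ζ' i)) = _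
          refine Prod.ext ?_ ?_
          · exact (Function.iterate_succ_apply' f t x₀).symm
          · funext i
            exact hζ' i
        rwa [heq] at hmem
    -- finale
    obtain ⟨t, ht⟩ := orbit_hits hf hmin x₀ hU hUne
    set v : Fin (m+1) → X := fun i => (hVne i).some with hvdef
    have hvV : ∀ i, v i ∈ V i := fun i => (hVne i).some_mem
    have hmemZ : (f^[t] x₀, v) ∈ Z := hall t v
    have hopen : IsOpen (U ×ˢ Set.pi univ V) :=
      hU.prod (isOpen_set_pi finite_univ (fun i _ => hV i))
    have hmemO : (f^[t] x₀, v) ∈ U ×ˢ Set.pi univ V := ⟨ht, fun i _ => hvV i⟩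
    obtain ⟨q, hqO, hqG⟩ := mem_closure_iff.mp hmemZ _ hopen hmemO
    obtain ⟨x, n, hn, rfl⟩ := hqG
    exact ⟨n, hn, x, hqO.1, fun i => hqO.2 i (mem_univ i)⟩

/-- Density of diagonal entry sets in `X`. -/
lemma delta_part (hf : Continuous f) (hmin : MinimalMap f) (hwm : WeaklyMixing f)
    [Nonempty X] (m : ℕ) :
    ∃ Y : Set X, Y ∈ residual X ∧
      ∀ x ∈ Y, Dense (Set.range fun n : ℕ => (starMap f m)^[n] (fun _ : Fin m => x)) := by
  have hScont : Continuous (starMap f m) :=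
    continuous_pi fun i => (hf.iterate _).comp (continuous_apply i)
  have hdiag : Continuous (fun x : X => (fun _ : Fin m => x)) :=
    continuous_pi fun _ => continuous_id
  obtain ⟨b, hbc, hbne, hb⟩ := TopologicalSpace.exists_countable_basis (Fin m → X)
  have hcnt : Countable ↥b := hbc.to_subtype
  set D : ↥b → Set X :=
    fun B => ⋃ n : ℕ, (fun x => (starMap f m)^[n] (fun _ : Fin m => x)) ⁻¹' (B : Set _)
    with hD
  have hDopen : ∀ B, IsOpen (D B) := fun B =>
    isOpen_iUnion fun n => (hb.isOpen B.2).preimage ((hScont.iterate n).comp hdiag)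
  have hDdense : ∀ B, Dense (D B) := by
    intro B
    rw [dense_iff_inter_open]
    rintro U hU hUne
    have hBne : (B : Set (Fin m → X)).Nonempty := by
      rcases eq_empty_or_nonempty (B : Set (Fin m → X)) with h | h
      · exact absurd (h ▸ B.2) hbne
      · exact h
    obtain ⟨β, hβ⟩ := hBne
    obtain ⟨VB, hVBo, hVBne, hVBsub, -⟩ := open_pi_reduce (hb.isOpen B.2) hβ
    obtain ⟨n, hn1, x, hxU, hx⟩ := STAR hf hmin hwm m U VB hU hUne hVBo hVBne
    refine ⟨x, hxU, mem_iUnion.mpr ⟨n, ?_⟩⟩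
    show (starMap f m)^[n] (fun _ : Fin m => x) ∈ (B : Set _)
    apply hVBsub
    intro i
    rw [starMap_iterate]
    exact hx i
  refine ⟨⋂ B, D B, ?_, ?_⟩
  · exact mem_residual.mpr ⟨⋂ B, D B, subset_rfl,
      IsGδ.iInter (fun B => (hDopen B).isGδ), dense_iInter_of_isOpen hDopen hDdense⟩
  · intro x hx
    rw [dense_iff_inter_open]
    rintro O hO ⟨pt, hpt⟩
    obtain ⟨B, hBb, hptB, hBO⟩ := hb.exists_subset_of_mem_open hpt hO
    have hmemD : x ∈ D ⟨B, hBb⟩ := mem_iInter.mp hx _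
    obtain ⟨n, hn⟩ := mem_iUnion.mp hmemD
    exact ⟨(starMap f m)^[n] (fun _ => x), hBO hn, mem_range_self n⟩

end St4

/-- A weakly mixing and minimal continuous map on a compact metric space
is Δ-transitive; equivalently, for every `m ≥ 1` and nonempty open `U, V₁, …, V_m` there
is `n ≥ 1` with `U ∩ f⁻ⁿ(V₁) ∩ ⋯ ∩ f⁻ᵐⁿ(V_m) ≠ ∅`. -/
theorem statement4 {X : Type*} [MetricSpace X] [CompactSpace X] (f : X → X)
    (hf : Continuous f) (hwm : WeaklyMixing f) (hmin : MinimalMap f) :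
    DeltaTransitive f ∧
      ∀ m : ℕ, 1 ≤ m → ∀ U : Set X, IsOpen U → U.Nonempty →
        ∀ V : Fin m → Set X, (∀ i, IsOpen (V i)) → (∀ i, (V i).Nonempty) →
          ∃ n : ℕ, 1 ≤ n ∧
            (U ∩ ⋂ i : Fin m, f^[((i : ℕ) + 1) * n] ⁻¹' V i).Nonempty := by
  constructor
  · intro m _
    cases isEmpty_or_nonempty X with
    | inl h =>
      refine ⟨Set.univ, Filter.univ_mem, fun x _ => ?_⟩
      exact isEmptyElim x
    | inr h =>
      exact St4.delta_part hf hmin hwm m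
  · intro m _ U hU hUne V hV hVne
    cases isEmpty_or_nonempty X with
    | inl h =>
      obtain ⟨x, -⟩ := hUne
      exact isEmptyElim x
    | inr h =>
      obtain ⟨n, hn, x, hxU, hx⟩ := St4.STAR hf hmin hwm m U V hU hUne hV hVne
      exact ⟨n, hn, x, hxU, Set.mem_iInter.mpr fun i => hx i⟩
end

section
/- Every minimal continuous map f : X → X on a compact metric space X is strongly transitive: for every nonempty open set U ⊆ X there is M > 0 such that ⋃_{j=1}^M f^j(U) = X. -/
open Set Function

/-- Every minimal continuous map on a compact metric space is strongly
transitive. -/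
theorem statement6 {X : Type*} [MetricSpace X] [CompactSpace X] (f : X → X)
    (hf : Continuous f) (hmin : MinimalMap f) :
    StronglyTransitive f := by
  intro U hU hUne
  -- f is surjective
  have himg : f '' Set.univ = Set.univ := by
    apply hmin _ (isCompact_univ.image hf).isClosed
    · obtain ⟨x, _⟩ := hUne
      exact ⟨f x, Set.mem_image_of_mem f (Set.mem_univ x)⟩
    · exact Set.image_mono (f := f) (Set.subset_univ _)
  have hsurj : Function.Surjective f := by
    intro y
    have : y ∈ f '' Set.univ := himg.ge (Set.mem_univ y)
    obtain ⟨x, _, hx⟩ := this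
    exact ⟨x, hx⟩
  -- every orbit meets U
  have hcov : ∀ x : X, ∃ n : ℕ, f^[n] x ∈ U := by
    by_contra h
    push_neg at h
    obtain ⟨x, hx⟩ := h
    set K : Set X := {x | ∀ n : ℕ, f^[n] x ∉ U} with hK
    have hKclosed : IsClosed K := by
      have : K = ⋂ n : ℕ, f^[n] ⁻¹' Uᶜ := by
        ext z; simp [hK, Set.mem_iInter]
      rw [this]
      exact isClosed_iInter fun n => (hU.isClosed_compl).preimage (hf.iterate n)
    have hKinv : f '' K ⊆ K := by
      rintro _ ⟨z, hz, rfl⟩ n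
      have := hz (n + 1)
      rwa [Function.iterate_succ_apply] at this
    have := hmin K hKclosed ⟨x, hx⟩ hKinv
    obtain ⟨u, hu⟩ := hUne
    have : u ∈ K := this ▸ Set.mem_univ u
    exact this 0 hu
  -- compactness: finite cover
  obtain ⟨s, hs⟩ := isCompact_univ.elim_finite_subcover (fun n : ℕ => f^[n] ⁻¹' U)
    (fun n => hU.preimage (hf.iterate n))
    (fun x _ => by obtain ⟨n, hn⟩ := hcov x; exact Set.mem_iUnion.2 ⟨n, hn⟩)
  set N := s.sup id with hN
  refine ⟨N + 1, Nat.succ_pos N, ?_⟩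
  apply Set.eq_univ_of_forall
  intro y
  obtain ⟨z, hz⟩ := (hsurj.iterate (N + 1)) y
  have hzmem : z ∈ ⋃ n ∈ s, f^[n] ⁻¹' U := hs (Set.mem_univ z)
  obtain ⟨n, hns, hn⟩ := Set.mem_iUnion₂.1 hzmem
  have hnN : n ≤ N := Finset.le_sup (f := id) hns
  have h1 : 1 ≤ N + 1 - n := by omega
  have h2 : N + 1 - n ≤ N + 1 := by omega
  have heq : f^[N + 1 - n] (f^[n] z) = y := by
    rw [← Function.iterate_add_apply]
    have : N + 1 - n + n = N + 1 := by omega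
    rw [this, hz]
  refine Set.mem_biUnion (Finset.mem_Icc.2 ⟨h1, h2⟩) ⟨f^[n] z, hn, heq⟩
end

section
/- Every strongly transitive continuous map f : X → X on a compact metric space X is syndetically transitive: for all nonempty open sets U, V ⊆ X the set N(U,V;f) = {n > 0 : f^n(U) ∩ V ≠ ∅} is syndetic. -/
open Set Function

/-- Every strongly transitive continuous map on a compact metric space is
syndetically transitive. -/
theorem statement7 {X : Type*} [MetricSpace X] [CompactSpace X] (f : X → X)
    (hf : Continuous f) (hst : StronglyTransitive f) :
    SyndeticallyTransitive f := by
  intro U V hU hV hUne hVne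
  -- f is surjective
  have hsurj : Function.Surjective f := by
    intro y
    obtain ⟨x0, hx0⟩ := hUne
    obtain ⟨M', hM', hcov'⟩ := hst Set.univ isOpen_univ ⟨x0, trivial⟩
    have hy : y ∈ (⋃ j ∈ Finset.Icc 1 M', f^[j] '' Set.univ) := by
      rw [hcov']; trivial
    simp only [Set.mem_iUnion, Finset.mem_Icc] at hy
    obtain ⟨j, ⟨hj1, _⟩, x, _, hx⟩ := hy
    obtain ⟨j', rfl⟩ : ∃ j', j = j' + 1 := ⟨j - 1, by omega⟩
    rw [Function.iterate_succ_apply'] at hx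
    exact ⟨f^[j'] x, hx⟩
  obtain ⟨M, hM, hcov⟩ := hst U hU hUne
  refine ⟨M, hM, fun n => ?_⟩
  obtain ⟨v, hv⟩ := hVne
  obtain ⟨w, hw⟩ := (hsurj.iterate n) v
  have hw' : w ∈ (⋃ j ∈ Finset.Icc 1 M, f^[j] '' U) := by rw [hcov]; trivial
  simp only [Set.mem_iUnion, Finset.mem_Icc] at hw'
  obtain ⟨j, ⟨hj1, hjM⟩, u, hu, huj⟩ := hw'
  refine ⟨n + j, ⟨by omega, ⟨v, ⟨u, hu, ?_⟩, hv⟩⟩, by omega, by omega⟩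
  rw [Function.iterate_add_apply, huj, hw]
end

section
/- Let M ≥ 3 and N ≥ 1 be integers and let A ⊆ ℕ be a finite M-dispersed set. Then there exists a finite M-dispersed set B ⊆ ℕ with A ⊆ B such that, setting k = max A + 1, for every pair of sequences of words u₁, …, u_N and v₁, …, v_N in L_k(Σ_B) there is n ≥ 0 such that σ^{i·n}([u_i]_B) ∩ [v_i]_B ≠ ∅ for every i = 1, …, N. -/
open Set Function

/-- The spacing shift `Σ_P ⊆ {0,1}^ℕ`: all sequences such that whenever two distinct
positions carry the symbol `1`, the distance between them lies in `P`. -/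
def SpacingSubshift (P : Set ℕ) : Set (ℕ → Bool) :=
  {x | ∀ i j : ℕ, i < j → x i = true → x j = true → j - i ∈ P}

theorem shift_mem_spacingSubshift {P : Set ℕ} {x : ℕ → Bool}
    (hx : x ∈ SpacingSubshift P) : (fun n => x (n + 1)) ∈ SpacingSubshift P := by
  intro i j hij hi hj
  have h := hx (i + 1) (j + 1) (by omega) hi hj
  have : j + 1 - (i + 1) = j - i := by omega
  rwa [this] at h

/-- The shift map `σ_P : Σ_P → Σ_P` of the spacing shift. -/
def sigmaP (P : Set ℕ) : SpacingSubshift P → SpacingSubshift P :=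
  fun x => ⟨fun n => x.1 (n + 1), shift_mem_spacingSubshift x.2⟩

/-- The cylinder `[1]_P` of points of `Σ_P` whose 0th coordinate is `1`. -/
def oneCyl (P : Set ℕ) : Set (SpacingSubshift P) := {x | x.1 0 = true}

/-- A set `P ⊆ ℕ` is thick if it contains arbitrarily long intervals of
consecutive integers. -/
def Thick (P : Set ℕ) : Prop :=
  ∀ n : ℕ, ∃ k : ℕ, Set.Ico k (k + n) ⊆ P

/-- `P(m) = ⋃_{k ≥ 1} {m^{2k-1}, …, m^{2k} - 1}`. -/
def ProgressionSet (m : ℕ) : Set ℕ :=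
  {n | ∃ k : ℕ, 1 ≤ k ∧ m ^ (2 * k - 1) ≤ n ∧ n < m ^ (2 * k)}

/-- A word `w` of length `k` is `P`-admissible if `Sp(w) ⊆ P`, i.e. whenever two distinct
positions of `w` carry the symbol `1`, their distance lies in `P`. -/
def AdmissibleWord (P : Set ℕ) {k : ℕ} (w : Fin k → Bool) : Prop :=
  ∀ i j : Fin k, (i : ℕ) < (j : ℕ) → w i = true → w j = true → (j : ℕ) - (i : ℕ) ∈ P

/-- The cylinder `[w]_P ⊆ Σ_P` of all points in which the word `w` appears at position 0. -/
def cylP (P : Set ℕ) {k : ℕ} (w : Fin k → Bool) : Set (SpacingSubshift P) :=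
  {x | ∀ i : Fin k, x.1 (i : ℕ) = w i}

/-- A finite set `S ⊆ ℕ` is `q`-dispersed if `|a - b| ≥ q` for all distinct
`a, b ∈ S ∪ {0}`. -/
def Dispersed (q : ℕ) (S : Finset ℕ) : Prop :=
  ∀ a ∈ insert 0 S, ∀ b ∈ insert 0 S, a < b → q ≤ b - a
section Statement8Aux

/-- Pairs of `N`-tuples of words of length `K+1`. -/
abbrev Tup (N K : ℕ) := (Fin N → Fin (K+1) → Bool) × (Fin N → Fin (K+1) → Bool)

/-- The basepoint assigned to a tuple `t`. -/
noncomputable def nOf (N K Q : ℕ) (t : Tup N K) : ℕ :=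
  Q * (N + 2) ^ ((Fintype.equivFin (Tup N K) t : ℕ))

/-- A tuple is good if all its words are `A`-admissible. -/
def goodT (A : Finset ℕ) (N K : ℕ) (t : Tup N K) : Prop :=
  (∀ i, AdmissibleWord (↑A) (t.1 i)) ∧ (∀ i, AdmissibleWord (↑A) (t.2 i))

/-- The cross distances needed to connect the cylinders of a tuple `t`. -/
noncomputable def crossSet (N K Q : ℕ) (t : Tup N K) : Finset ℕ :=
  Finset.univ.biUnion fun i : Fin N =>
    Finset.univ.biUnion fun p : Fin (K+1) =>
      Finset.univ.biUnion fun q : Fin (K+1) =>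
        if t.1 i p = true ∧ t.2 i q = true
        then {((i : ℕ) + 1) * nOf N K Q t + (q : ℕ) - (p : ℕ)} else ∅

open Classical in
/-- The enlarged dispersed set. -/
noncomputable def bigB (A : Finset ℕ) (N K Q : ℕ) : Finset ℕ :=
  A ∪ Finset.univ.biUnion fun t : Tup N K =>
    if goodT A N K t then crossSet N K Q t else ∅

lemma mem_crossSet {N K Q b : ℕ} {t : Tup N K} :
    b ∈ crossSet N K Q t ↔ ∃ (i : Fin N) (p q : Fin (K+1)),
      t.1 i p = true ∧ t.2 i q = true ∧
      b = ((i : ℕ) + 1) * nOf N K Q t + (q : ℕ) - (p : ℕ) := by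
  simp only [crossSet, Finset.mem_biUnion, Finset.mem_univ, true_and]
  constructor
  · rintro ⟨i, p, q, hb⟩
    split_ifs at hb with h
    · simp only [Finset.mem_singleton] at hb
      exact ⟨i, p, q, h.1, h.2, hb⟩
    · simp at hb
  · rintro ⟨i, p, q, h1, h2, hb⟩
    refine ⟨i, p, q, ?_⟩
    rw [if_pos ⟨h1, h2⟩]
    simpa using hb

lemma mem_bigB {A : Finset ℕ} {N K Q b : ℕ} :
    b ∈ bigB A N K Q ↔ b ∈ A ∨ ∃ t : Tup N K, goodT A N K t ∧
      ∃ (i : Fin N) (p q : Fin (K+1)), t.1 i p = true ∧ t.2 i q = true ∧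
        b = ((i : ℕ) + 1) * nOf N K Q t + (q : ℕ) - (p : ℕ) := by
  classical
  simp only [bigB, Finset.mem_union, Finset.mem_biUnion, Finset.mem_univ, true_and]
  apply or_congr_right
  constructor
  · rintro ⟨t, hb⟩
    split_ifs at hb with h
    · exact ⟨t, h, mem_crossSet.mp hb⟩
    · simp at hb
  · rintro ⟨t, h, hrest⟩
    refine ⟨t, ?_⟩
    rw [if_pos h]
    exact mem_crossSet.mpr hrest

lemma nOf_ge {N K Q : ℕ} (t : Tup N K) : Q ≤ nOf N K Q t :=
  Nat.le_mul_of_pos_right Q (by positivity)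

lemma nOf_gap {N K Q : ℕ} {t t' : Tup N K}
    (h : ((Fintype.equivFin (Tup N K) t : ℕ)) < (Fintype.equivFin (Tup N K) t' : ℕ)) :
    N * nOf N K Q t + 2 * nOf N K Q t ≤ nOf N K Q t' := by
  have h1 : (N + 2) * ((N + 2) ^ ((Fintype.equivFin (Tup N K) t : ℕ)))
      ≤ (N + 2) ^ ((Fintype.equivFin (Tup N K) t' : ℕ)) := by
    rw [← pow_succ']
    exact Nat.pow_le_pow_right (by omega) (by omega)
  calc N * nOf N K Q t + 2 * nOf N K Q t = (N + 2) * nOf N K Q t := by ring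
    _ = Q * ((N + 2) * (N + 2) ^ ((Fintype.equivFin (Tup N K) t : ℕ))) := by
        rw [nOf]; ring
    _ ≤ Q * (N + 2) ^ ((Fintype.equivFin (Tup N K) t' : ℕ)) := Nat.mul_le_mul_left Q h1
    _ = nOf N K Q t' := rfl

lemma disp_sep {M : ℕ} {A : Finset ℕ} (hA : Dispersed M A)
    {x x' y y' : ℕ}
    (hx : x = x' ∨ (x < x' ∧ x' - x ∈ A) ∨ (x' < x ∧ x - x' ∈ A))
    (hy : y = y' ∨ (y < y' ∧ y' - y ∈ A) ∨ (y' < y ∧ y - y' ∈ A)) :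
    x + y' = x' + y ∨ M + (x + y') ≤ x' + y ∨ M + (x' + y) ≤ x + y' := by
  have h0 : ∀ a ∈ A, 0 < a → M ≤ a := fun a ha hpos => by
    have := hA 0 (Finset.mem_insert_self 0 A) a (Finset.mem_insert_of_mem ha) hpos
    omega
  have hd : ∀ a ∈ A, ∀ b ∈ A, a < b → M ≤ b - a := fun a ha b hb =>
    hA a (Finset.mem_insert_of_mem ha) b (Finset.mem_insert_of_mem hb)
  rcases hx with h | ⟨h, ha⟩ | ⟨h, ha⟩ <;> rcases hy with g | ⟨g, hb⟩ | ⟨g, hb⟩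
  · omega
  · have := h0 _ hb (by omega); omega
  · have := h0 _ hb (by omega); omega
  · have := h0 _ ha (by omega); omega
  · rcases Nat.lt_trichotomy (x' - x) (y' - y) with hc | hc | hc
    · have := hd _ ha _ hb hc; omega
    · omega
    · have := hd _ hb _ ha hc; omega
  · have := h0 _ ha (by omega); have := h0 _ hb (by omega); omega
  · have := h0 _ ha (by omega); omega
  · have := h0 _ ha (by omega); have := h0 _ hb (by omega); omega
  · rcases Nat.lt_trichotomy (x - x') (y - y') with hc | hc | hc
    · have := hd _ ha _ hb hc; omega
    · omega
    · have := hd _ hb _ ha hc; omega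

lemma adm_trich {A : Finset ℕ} {K : ℕ} {w : Fin (K+1) → Bool}
    (hw : AdmissibleWord (↑A) w) {p p' : Fin (K+1)}
    (hp : w p = true) (hp' : w p' = true) :
    (p : ℕ) = (p' : ℕ) ∨ ((p : ℕ) < (p' : ℕ) ∧ (p' : ℕ) - (p : ℕ) ∈ A) ∨
      ((p' : ℕ) < (p : ℕ) ∧ (p : ℕ) - (p' : ℕ) ∈ A) := by
  rcases Nat.lt_trichotomy (p : ℕ) (p' : ℕ) with h | h | h
  · exact Or.inr (Or.inl ⟨h, Finset.mem_coe.mp (hw p p' h hp hp')⟩)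
  · exact Or.inl h
  · exact Or.inr (Or.inr ⟨h, Finset.mem_coe.mp (hw p' p h hp' hp)⟩)

lemma cross_sep {M : ℕ} {A : Finset ℕ} (hA : Dispersed M A) (hM : 3 ≤ M)
    {N K Q : ℕ} (hQ : 2 * K + M ≤ Q)
    {t t' : Tup N K} (hg : goodT A N K t) (hg' : goodT A N K t')
    {i i' : Fin N} {p q p' q' : Fin (K+1)}
    (h1 : t.1 i p = true) (h2 : t.2 i q = true)
    (h1' : t'.1 i' p' = true) (h2' : t'.2 i' q' = true) :
    (((i:ℕ)+1) * nOf N K Q t + (q:ℕ) - (p:ℕ)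
        = ((i':ℕ)+1) * nOf N K Q t' + (q':ℕ) - (p':ℕ)) ∨
    M + (((i:ℕ)+1) * nOf N K Q t + (q:ℕ) - (p:ℕ))
        ≤ ((i':ℕ)+1) * nOf N K Q t' + (q':ℕ) - (p':ℕ) ∨
    M + (((i':ℕ)+1) * nOf N K Q t' + (q':ℕ) - (p':ℕ))
        ≤ ((i:ℕ)+1) * nOf N K Q t + (q:ℕ) - (p:ℕ) := by
  have hp : (p:ℕ) ≤ K := Nat.lt_succ_iff.mp p.isLt
  have hq : (q:ℕ) ≤ K := Nat.lt_succ_iff.mp q.isLt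
  have hp' : (p':ℕ) ≤ K := Nat.lt_succ_iff.mp p'.isLt
  have hq' : (q':ℕ) ≤ K := Nat.lt_succ_iff.mp q'.isLt
  have hnt : Q ≤ nOf N K Q t := nOf_ge t
  have hnt' : Q ≤ nOf N K Q t' := nOf_ge t'
  have hmA : nOf N K Q t ≤ ((i:ℕ)+1) * nOf N K Q t :=
    Nat.le_mul_of_pos_left _ (Nat.succ_pos _)
  have hmA' : nOf N K Q t' ≤ ((i':ℕ)+1) * nOf N K Q t' :=
    Nat.le_mul_of_pos_left _ (Nat.succ_pos _)
  by_cases ht : t = t'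
  · subst ht
    by_cases hi : i = i'
    · subst hi
      have hsep := disp_sep hA (adm_trich (hg.2 i) h2 h2') (adm_trich (hg.1 i) h1 h1')
      omega
    · have hvi : (i:ℕ) ≠ (i':ℕ) := fun hc => hi (Fin.ext hc)
      have hmul : ∀ x y : Fin N, (x:ℕ) < (y:ℕ) →
          ((x:ℕ)+1) * nOf N K Q t + nOf N K Q t ≤ ((y:ℕ)+1) * nOf N K Q t := by
        intro x y hxy
        calc ((x:ℕ)+1) * nOf N K Q t + nOf N K Q t = ((x:ℕ)+2) * nOf N K Q t := by ring
          _ ≤ ((y:ℕ)+1) * nOf N K Q t := Nat.mul_le_mul_right _ (by omega)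
      rcases Nat.lt_or_ge (i:ℕ) (i':ℕ) with hlt | hge
      · have := hmul i i' hlt; omega
      · have := hmul i' i (by omega); omega
  · have hne : (Fintype.equivFin (Tup N K) t : ℕ) ≠ (Fintype.equivFin (Tup N K) t' : ℕ) := by
      intro hc
      exact ht ((Fintype.equivFin (Tup N K)).injective (Fin.ext hc))
    have hiN : ((i:ℕ)+1) ≤ N := i.isLt
    have hiN' : ((i':ℕ)+1) ≤ N := i'.isLt
    rcases Nat.lt_or_ge (Fintype.equivFin (Tup N K) t : ℕ)
        (Fintype.equivFin (Tup N K) t' : ℕ) with hlt | hge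
    · have hgap := nOf_gap (N := N) (K := K) (Q := Q) hlt
      have hbound : ((i:ℕ)+1) * nOf N K Q t ≤ N * nOf N K Q t :=
        Nat.mul_le_mul_right _ hiN
      omega
    · have hgap := nOf_gap (N := N) (K := K) (Q := Q)
        (t := t') (t' := t) (by omega)
      have hbound : ((i':ℕ)+1) * nOf N K Q t' ≤ N * nOf N K Q t' :=
        Nat.mul_le_mul_right _ hiN'
      omega

lemma dispersed_bigB {M : ℕ} {A : Finset ℕ} (hA : Dispersed M A) (hM : 3 ≤ M)
    {N K Q : ℕ} (hQ : 2 * K + M ≤ Q) (hK : ∀ a ∈ A, a ≤ K) :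
    Dispersed M (bigB A N K Q) := by
  intro a ha b hb hab
  have rep : ∀ c ∈ insert 0 (bigB A N K Q), (c ∈ insert 0 A) ∨
      ∃ t : Tup N K, goodT A N K t ∧ ∃ (i : Fin N) (p q : Fin (K+1)),
        t.1 i p = true ∧ t.2 i q = true ∧
        c = ((i:ℕ)+1) * nOf N K Q t + (q:ℕ) - (p:ℕ) := by
    intro c hc
    rcases Finset.mem_insert.mp hc with h | h
    · exact Or.inl (by simp [h])
    · rcases mem_bigB.mp h with h | h
      · exact Or.inl (Finset.mem_insert_of_mem h)
      · exact Or.inr h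
  have bound : ∀ c ∈ insert 0 A, c ≤ K := by
    intro c hc
    rcases Finset.mem_insert.mp hc with h | h
    · omega
    · exact hK c h
  have crossLB : ∀ (t : Tup N K) (i : Fin N) (p q : Fin (K+1)),
      K + M ≤ ((i:ℕ)+1) * nOf N K Q t + (q:ℕ) - (p:ℕ) := by
    intro t i p q
    have h1 : Q ≤ nOf N K Q t := nOf_ge t
    have h2 : nOf N K Q t ≤ ((i:ℕ)+1) * nOf N K Q t :=
      Nat.le_mul_of_pos_left _ (Nat.succ_pos _)
    have hp : (p:ℕ) ≤ K := Nat.lt_succ_iff.mp p.isLt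
    omega
  rcases rep a ha with hra | ⟨t, hg, i, p, q, h1, h2, hval⟩ <;>
    rcases rep b hb with hrb | ⟨t', hg', i', p', q', h1', h2', hval'⟩
  · exact hA a hra b hrb hab
  · have hb1 := bound a hra
    have hb2 := crossLB t' i' p' q'
    omega
  · have hb1 := bound b hrb
    have hb2 := crossLB t i p q
    omega
  · rcases cross_sep hA hM hQ hg hg' h1 h2 h1' h2' with h | h | h <;> omega

/-- Elements of `bigB` that are at most `K` come from `A`. -/
lemma bigB_small_mem {M : ℕ} {A : Finset ℕ} (hM : 3 ≤ M)
    {N K Q b : ℕ} (hQ : 2 * K + M ≤ Q)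
    (hb : b ∈ bigB A N K Q) (hbK : b ≤ K) : b ∈ A := by
  rcases mem_bigB.mp hb with h | ⟨t, _, i, p, q, _, _, hval⟩
  · exact h
  · exfalso
    have h1 : Q ≤ nOf N K Q t := nOf_ge t
    have h2 : nOf N K Q t ≤ ((i:ℕ)+1) * nOf N K Q t :=
      Nat.le_mul_of_pos_left _ (Nat.succ_pos _)
    have hp : (p:ℕ) ≤ K := Nat.lt_succ_iff.mp p.isLt
    omega

lemma adm_bigB_to_A {M : ℕ} {A : Finset ℕ} (hM : 3 ≤ M)
    {N K Q : ℕ} (hQ : 2 * K + M ≤ Q) {w : Fin (K+1) → Bool}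
    (hw : AdmissibleWord (↑(bigB A N K Q)) w) : AdmissibleWord (↑A) w := by
  intro i j hij hi hj
  have h := hw i j hij hi hj
  have hjK : (j:ℕ) - (i:ℕ) ≤ K := by
    have := Nat.lt_succ_iff.mp j.isLt
    omega
  exact Finset.mem_coe.mpr (bigB_small_mem hM hQ (Finset.mem_coe.mp h) hjK)

/-- The connecting point: word `w` at position `0`, word `w'` at position `c`. -/
def thePt (K c : ℕ) (w w' : Fin (K+1) → Bool) : ℕ → Bool := fun m =>
  if h : m < K + 1 then w ⟨m, h⟩
  else if h2 : c ≤ m ∧ m - c < K + 1 then w' ⟨m - c, h2.2⟩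
  else false

lemma thePt_low {K c m : ℕ} {w w' : Fin (K+1) → Bool} (hm : m < K + 1) :
    thePt K c w w' m = w ⟨m, hm⟩ := dif_pos hm

lemma thePt_mid {K c m : ℕ} {w w' : Fin (K+1) → Bool} (hcK : K + 1 ≤ c)
    (hm1 : c ≤ m) (hm2 : m - c < K + 1) :
    thePt K c w w' m = w' ⟨m - c, hm2⟩ := by
  rw [thePt, dif_neg (by omega), dif_pos ⟨hm1, hm2⟩]

lemma thePt_cases {K c m : ℕ} {w w' : Fin (K+1) → Bool}
    (h : thePt K c w w' m = true) :
    (∃ hm : m < K + 1, w ⟨m, hm⟩ = true) ∨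
      (c ≤ m ∧ ∃ hm : m - c < K + 1, w' ⟨m - c, hm⟩ = true) := by
  rw [thePt] at h
  split_ifs at h with h1 h2
  · exact Or.inl ⟨h1, h⟩
  · exact Or.inr ⟨h2.1, h2.2, h⟩

lemma sigmaP_iterate {P : Set ℕ} (x : SpacingSubshift P) (n m : ℕ) :
    (((sigmaP P)^[n] x) : SpacingSubshift P).1 m = x.1 (m + n) := by
  induction n generalizing x with
  | zero => rfl
  | succ n ih =>
    rw [Function.iterate_succ_apply, ih]
    rfl

end Statement8Aux

/-- Connecting lemma: if all the needed cross distances are present in `B`,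
the `c`-th iterate of the cylinder of `w` meets the cylinder of `w'`. -/
lemma connect {B : Finset ℕ} {K c : ℕ} (hcK : K + 1 ≤ c)
    {w w' : Fin (K+1) → Bool}
    (hw : AdmissibleWord (↑B) w) (hw' : AdmissibleWord (↑B) w')
    (hcross : ∀ p q : Fin (K+1), w p = true → w' q = true →
      c + (q : ℕ) - (p : ℕ) ∈ (↑B : Set ℕ)) :
    ((sigmaP ↑B)^[c] '' cylP (↑B) w ∩ cylP (↑B) w').Nonempty := by
  have hx : thePt K c w w' ∈ SpacingSubshift (↑B : Set ℕ) := by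
    intro i0 j0 hij h0 h1
    rcases thePt_cases h0 with ⟨hi0, hw0⟩ | ⟨hge0, hi0, hw0⟩ <;>
      rcases thePt_cases h1 with ⟨hj0, hw1⟩ | ⟨hge1, hj0, hw1⟩
    · exact hw ⟨i0, hi0⟩ ⟨j0, hj0⟩ hij hw0 hw1
    · have hmem := hcross ⟨i0, hi0⟩ ⟨j0 - c, hj0⟩ hw0 hw1
      have heq : j0 - i0 = c + (j0 - c) - i0 := by omega
      rw [heq]; exact hmem
    · exact absurd hij (by omega)
    · have hmem := hw' ⟨i0 - c, hi0⟩ ⟨j0 - c, hj0⟩ (show i0 - c < j0 - c by omega) hw0 hw1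
      have heq : j0 - i0 = (j0 - c) - (i0 - c) := by omega
      rw [heq]; exact hmem
  refine ⟨(sigmaP ↑B)^[c] ⟨thePt K c w w', hx⟩, ⟨⟨thePt K c w w', hx⟩, ?_, rfl⟩, ?_⟩
  · intro m
    show thePt K c w w' (m : ℕ) = w m
    rw [thePt_low m.isLt]
  · intro m
    show ((sigmaP ↑B)^[c] ⟨thePt K c w w', hx⟩).1 (m : ℕ) = w' m
    rw [sigmaP_iterate]
    have h2 : ((m : ℕ) + c) - c < K + 1 := by have := m.isLt; omega
    show thePt K c w w' ((m : ℕ) + c) = w' m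
    rw [thePt_mid hcK (Nat.le_add_left c (m : ℕ)) h2]
    exact congrArg w' (Fin.ext (show ((m : ℕ) + c) - c = (m : ℕ) by omega))


/-- For integers `M ≥ 3`, `N ≥ 1` and a finite `M`-dispersed set `A ⊆ ℕ`
there is a finite `M`-dispersed set `B ⊇ A` such that, with `k = max A + 1`, for all words
`u₁, …, u_N, v₁, …, v_N ∈ L_k(Σ_B)` there is `n ≥ 0` with
`σ^{i·n}([u_i]_B) ∩ [v_i]_B ≠ ∅` for every `i = 1, …, N`. -/
theorem statement8 (M N : ℕ) (hM : 3 ≤ M) (hN : 1 ≤ N) (A : Finset ℕ)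
    (hA : Dispersed M A) :
    ∃ B : Finset ℕ, Dispersed M B ∧ A ⊆ B ∧
      ∀ u v : Fin N → (Fin (A.sup id + 1) → Bool),
        (∀ i, AdmissibleWord (↑B) (u i)) → (∀ i, AdmissibleWord (↑B) (v i)) →
          ∃ n : ℕ, ∀ i : Fin N,
            ((sigmaP ↑B)^[((i : ℕ) + 1) * n] '' cylP (↑B) (u i) ∩
              cylP (↑B) (v i)).Nonempty := by
  classical
  refine ⟨bigB A N (A.sup id) (2 * A.sup id + M),
    dispersed_bigB hA hM le_rfl (fun a ha => Finset.le_sup (f := id) ha), ?_, ?_⟩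
  · intro a ha
    exact mem_bigB.mpr (Or.inl ha)
  · intro u v hu hv
    have hgood : goodT A N (A.sup id) (u, v) :=
      ⟨fun i => adm_bigB_to_A hM le_rfl (hu i),
       fun i => adm_bigB_to_A hM le_rfl (hv i)⟩
    refine ⟨nOf N (A.sup id) (2 * A.sup id + M) (u, v), ?_⟩
    intro i
    apply connect
    · have h1 : 2 * A.sup id + M ≤ nOf N (A.sup id) (2 * A.sup id + M) (u, v) :=
        nOf_ge _
      have h2 : nOf N (A.sup id) (2 * A.sup id + M) (u, v) ≤
          ((i : ℕ) + 1) * nOf N (A.sup id) (2 * A.sup id + M) (u, v) :=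
        Nat.le_mul_of_pos_left _ (Nat.succ_pos _)
      omega
    · exact hu i
    · exact hv i
    · intro p q hp hq
      exact Finset.mem_coe.mpr
        (mem_bigB.mpr (Or.inr ⟨(u, v), hgood, i, p, q, hp, hq, rfl⟩))
end

section
/- There exists a set P ⊆ ℕ such that the spacing shift σ_P : Σ_P → Σ_P is multi-transitive but not weakly mixing. -/
open Set Function

namespace S9aux



-- iterate lemmas
lemma sigmaP_iterate {P : Set ℕ} (k : ℕ) (x : SpacingSubshift P) (j : ℕ) :
    ((sigmaP P)^[k] x).1 j = x.1 (j + k) := by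
  induction k generalizing x with
  | zero => rfl
  | succ k ih =>
      rw [Function.iterate_succ_apply]
      rw [ih (sigmaP P x)]
      show x.1 (j + k + 1) = _
      rfl

lemma prod_iterate {X : Type*} (f : X → X) (n : ℕ) (p : X × X) :
    (fun q : X × X => (f q.1, f q.2))^[n] p = (f^[n] p.1, f^[n] p.2) := by
  induction n generalizing p with
  | zero => rfl
  | succ n ih => rw [Function.iterate_succ_apply, ih]; rfl

lemma starMap_iterate {X : Type*} (f : X → X) (m n : ℕ) (x : Fin m → X) (i : Fin m) :
    ((fun y (i : Fin m) => f^[(i : ℕ) + 1] (y i))^[n] x) i = f^[n * ((i : ℕ) + 1)] (x i) := by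
  induction n generalizing x with
  | zero => simp
  | succ n ih =>
      rw [Function.iterate_succ_apply]
      rw [ih]
      rw [← Function.iterate_add_apply]
      congr 1
      ring

lemma onePt_mem (P : Set ℕ) (k : ℕ) : (fun j => decide (j = k)) ∈ SpacingSubshift P := by
  intro i j hij hi hj
  rw [decide_eq_true_iff] at hi hj
  omega

lemma isOpen_coord (P : Set ℕ) (k : ℕ) :
    IsOpen {x : SpacingSubshift P | x.1 k = true} := by
  have : Continuous (fun x : SpacingSubshift P => x.1 k) :=
    (continuous_apply k).comp continuous_subtype_val
  exact (isOpen_discrete {true}).preimage this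

lemma exists_cyl {S : Set (ℕ → Bool)} {O : Set S} (hO : IsOpen O) {u : S} (hu : u ∈ O) :
    ∃ N, ∀ y : S, (∀ j < N, y.1 j = u.1 j) → y ∈ O := by
  obtain ⟨O', hO', rfl⟩ := isOpen_induced_iff.1 hO
  obtain ⟨I, W, hW, hsub⟩ := isOpen_pi_iff.1 hO' u.1 hu
  refine ⟨I.sup id + 1, fun y hy => ?_⟩
  apply hsub
  intro j hj
  have hj' : j ∈ I := hj
  rw [hy j (by have := Finset.le_sup (f := id) hj'; simpa using Nat.lt_succ_of_le this)]
  exact (hW j hj').2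

lemma exists_box {P : Set ℕ} {m : ℕ} {U : Set (Fin m → SpacingSubshift P)} (hU : IsOpen U)
    {u : Fin m → SpacingSubshift P} (hu : u ∈ U) :
    ∃ N, ∀ y : Fin m → SpacingSubshift P,
      (∀ i, ∀ j < N, ((y i).1 j = (u i).1 j)) → y ∈ U := by
  obtain ⟨I, W, hW, hsub⟩ := isOpen_pi_iff.1 hU u hu
  have key : ∀ i : Fin m, ∃ N, ∀ y : SpacingSubshift P,
      (∀ j < N, y.1 j = (u i).1 j) → (i ∈ I → y ∈ W i) := by
    intro i
    by_cases hi : i ∈ I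
    · obtain ⟨N, hN⟩ := exists_cyl (hW i hi).1 (hW i hi).2
      exact ⟨N, fun y hy _ => hN y hy⟩
    · exact ⟨0, fun y _ hi' => absurd hi' hi⟩
  choose Nf hNf using key
  refine ⟨Finset.univ.sup Nf, fun y hy => hsub ?_⟩
  intro i hi
  exact hNf i (y i) (fun j hj => hy i j (lt_of_lt_of_le hj (Finset.le_sup (Finset.mem_univ i)))) hi

abbrev Tup : Type := ℕ × List (Finset ℕ × Finset ℕ)

noncomputable def dec (c : ℕ) : Tup := (Encodable.decode (α := Tup) c).getD (0, [])

lemma dec_encode (t : Tup) : dec (Encodable.encode t) = t := by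
  simp [dec, Encodable.encodek]

noncomputable def sz (c : ℕ) : ℕ := (dec c).1 + (dec c).2.length + 2

noncomputable def EE : ℕ → ℕ
  | 0 => 4
  | c + 1 => (EE c + 4 * sz c + 4) * (sz c + 2)

noncomputable def nn (c : ℕ) : ℕ := EE c + 2 * sz c

def Safe (t : Tup) : Prop :=
  ∀ (i : ℕ) (A B : Finset ℕ), t.2[i]? = some (A, B) →
    ∀ a ∈ A, ∀ a' ∈ A, ∀ b ∈ B, ∀ b' ∈ B,
      a < t.1 → a' < t.1 → b < t.1 → b' < t.1 → b' + a ≠ b + a' + 1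

def block (c : ℕ) : Set ℕ :=
  {x | Safe (dec c) ∧ ∃ (i : ℕ) (A B : Finset ℕ), (dec c).2[i]? = some (A, B) ∧
        ∃ a ∈ A, ∃ b ∈ B, a < (dec c).1 ∧ b < (dec c).1 ∧
          x + a = (i + 1) * nn c + b}

def PP : Set ℕ := {x | ∃ c, x ∈ block c}

lemma sz_ge (c : ℕ) : 2 ≤ sz c := by simp [sz]
lemma szN (c : ℕ) : (dec c).1 + 2 ≤ sz c := by simp [sz]
lemma szLen (c : ℕ) : (dec c).2.length + 2 ≤ sz c := by simp [sz]

lemma EE_ge (c : ℕ) : 4 ≤ EE c := by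
  cases c with
  | zero => simp [EE]
  | succ c => have := sz_ge c; simp [EE]; nlinarith

lemma EE_succ (c : ℕ) : sz c * (EE c + 2 * sz c) + sz c + 4 ≤ EE (c+1) := by
  have h1 := sz_ge c; have h2 := EE_ge c
  show _ ≤ (EE c + 4 * sz c + 4) * (sz c + 2)
  nlinarith

lemma EE_mono : Monotone EE := by
  apply monotone_nat_of_le_succ
  intro c
  have := EE_succ c; have := sz_ge c; have := EE_ge c
  nlinarith

lemma block_mem_bounds {c x : ℕ} (hx : x ∈ block c) :
    EE c + 2 ≤ x ∧ x + 2 ≤ EE (c+1) := by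
  obtain ⟨-, i, A, B, hi, a, ha, b, hb, haN, hbN, heq⟩ := hx
  have hilen : i < (dec c).2.length := (List.getElem?_eq_some_iff.1 hi).1
  have h1 := szN c; have h2 := szLen c; have h3 := EE_ge c; have h4 := EE_succ c
  have hnn : nn c = EE c + 2 * sz c := rfl
  constructor
  · -- x ≥ (i+1) nn - a ≥ nn - sz ≥ EE + sz
    have : nn c ≤ (i+1) * nn c := Nat.le_mul_of_pos_left _ (Nat.succ_pos _)
    omega
  · -- x ≤ (i+1) nn + b ≤ (len) * nn + sz
    have h5 : (i+1) * nn c ≤ sz c * nn c := Nat.mul_le_mul_right _ (by omega)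
    have h6 := EE_succ c
    rw [← hnn] at h6
    omega

lemma block_window {c x i a b : ℕ} {A B : Finset ℕ}
    (_hi : (dec c).2[i]? = some (A, B)) (haN : a < (dec c).1) (hbN : b < (dec c).1)
    (heq : x + a = (i + 1) * nn c + b) :
    (i+1) * nn c ≤ x + sz c ∧ x ≤ (i+1) * nn c + sz c := by
  have h1 := szN c; omega

lemma PP_ge {p : ℕ} (hp : p ∈ PP) : 6 ≤ p := by
  obtain ⟨c, hc⟩ := hp
  have := (block_mem_bounds hc).1
  have := EE_ge c
  omega

lemma PP_sep {p : ℕ} (hp : p ∈ PP) : p + 1 ∉ PP := by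
  rintro ⟨c', hc'⟩
  obtain ⟨c, hc⟩ := hp
  rcases lt_trichotomy c c' with h | rfl | h
  · have h1 := (block_mem_bounds hc).2
    have h2 := (block_mem_bounds hc').1
    have h3 := EE_mono (show c + 1 ≤ c' by omega)
    omega
  · obtain ⟨hsafe, i, A, B, hi, a, ha, b, hb, haN, hbN, heq⟩ := hc
    obtain ⟨-, i', A', B', hi', a', ha', b', hb', haN', hbN', heq'⟩ := hc'
    rcases lt_trichotomy i i' with h | rfl | h
    · have w1 := block_window hi haN hbN heq
      have w2 := block_window hi' haN' hbN' heq'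
      have : (i+1+1) * nn c ≤ (i'+1) * nn c := Nat.mul_le_mul_right _ (by omega)
      have hnn : nn c = EE c + 2 * sz c := rfl
      have h3 := EE_ge c
      have : (i+1) * nn c + nn c = (i+1+1) * nn c := by ring
      omega
    · rw [hi] at hi'
      obtain ⟨rfl, rfl⟩ : A = A' ∧ B = B' := by
        have := Option.some.inj hi'; exact ⟨congrArg Prod.fst this, congrArg Prod.snd this⟩
      exact hsafe i A B hi a ha a' ha' b hb b' hb' haN haN' hbN hbN' (by omega)
    · have w1 := block_window hi haN hbN heq
      have w2 := block_window hi' haN' hbN' heq'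
      have : (i'+1+1) * nn c ≤ (i+1) * nn c := Nat.mul_le_mul_right _ (by omega)
      have hnn : nn c = EE c + 2 * sz c := rfl
      have h3 := EE_ge c
      have : (i'+1) * nn c + nn c = (i'+1+1) * nn c := by ring
      omega
  · have h1 := (block_mem_bounds hc').2
    have h2 := (block_mem_bounds hc).1
    have h3 := EE_mono (show c' + 1 ≤ c by omega)
    omega

lemma not_wm : ¬ (TopTransitive (fun p : SpacingSubshift PP × SpacingSubshift PP =>
    (sigmaP PP p.1, sigmaP PP p.2))) := by
  intro h
  have hopen1 : IsOpen {p : SpacingSubshift PP × SpacingSubshift PP |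
      p.1.1 0 = true ∧ p.2.1 0 = true} := by
    exact ((isOpen_coord PP 0).preimage continuous_fst).inter
      ((isOpen_coord PP 0).preimage continuous_snd)
  have hopen2 : IsOpen {p : SpacingSubshift PP × SpacingSubshift PP |
      p.1.1 0 = true ∧ p.2.1 1 = true} := by
    exact ((isOpen_coord PP 0).preimage continuous_fst).inter
      ((isOpen_coord PP 1).preimage continuous_snd)
  obtain ⟨n, hn, q, ⟨p, hpU, rfl⟩, hqV⟩ :=
    h _ _ hopen1 hopen2
      ⟨(⟨fun j => decide (j = 0), onePt_mem PP 0⟩, ⟨fun j => decide (j = 0), onePt_mem PP 0⟩),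
        by constructor <;> simp⟩
      ⟨(⟨fun j => decide (j = 0), onePt_mem PP 0⟩, ⟨fun j => decide (j = 1), onePt_mem PP 1⟩),
        by constructor <;> simp⟩
  rw [prod_iterate] at hqV
  obtain ⟨h1, h2⟩ := hqV
  rw [sigmaP_iterate] at h1 h2
  have hnP : n ∈ PP := by
    have := p.1.2 0 (0 + n) (by omega) hpU.1 h1
    simpa using this
  have hn1P : 1 + n ∈ PP := by
    have := p.2.2 0 (1 + n) (by omega) hpU.2 h2
    simpa using this
  exact PP_sep hnP (by rwa [Nat.add_comm] at hn1P)

lemma starMap_iterate' {X : Type*} (f : X → X) (m n : ℕ) (x : Fin m → X) (i : Fin m) :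
    ((starMap f m)^[n] x) i = f^[n * ((i : ℕ) + 1)] (x i) :=
  starMap_iterate f m n x i

lemma multiTrans : MultiTransitive (sigmaP PP) := by
  intro m _hm U V hU hV hUne hVne
  classical
  obtain ⟨u, hu⟩ := hUne
  obtain ⟨v, hv⟩ := hVne
  obtain ⟨Nu, hNu⟩ := exists_box hU hu
  obtain ⟨Nv, hNv⟩ := exists_box hV hv
  set N := max Nu Nv + 1 with hNdef
  have hNu' : Nu < N := by have := le_max_left Nu Nv; omega
  have hNv' : Nv < N := by have := le_max_right Nu Nv; omega
  set A : Fin m → Finset ℕ :=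
    (fun i => (Finset.range N).filter (fun j => (u i).1 j = true)) with hA
  set B : Fin m → Finset ℕ :=
    (fun i => (Finset.range N).filter (fun j => (v i).1 j = true)) with hB
  set c := Encodable.encode ((N, List.ofFn (fun i => (A i, B i))) : Tup) with hc
  have hdec : dec c = (N, List.ofFn (fun i => (A i, B i))) := dec_encode _
  have hN1 : (dec c).1 = N := by rw [hdec]
  have hget : ∀ i : Fin m, (dec c).2[(i:ℕ)]? = some (A i, B i) := by
    intro i
    rw [hdec]
    show (List.ofFn (fun i : Fin m => (A i, B i)))[(i:ℕ)]? = some (A i, B i)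
    rw [List.getElem?_eq_getElem (by simp)]
    simp
  have hAmem : ∀ (i : Fin m) (j : ℕ), j ∈ A i ↔ (j < N ∧ (u i).1 j = true) := by
    intro i j
    rw [hA]
    simp [Finset.mem_filter, Finset.mem_range]
  have hBmem : ∀ (i : Fin m) (j : ℕ), j ∈ B i ↔ (j < N ∧ (v i).1 j = true) := by
    intro i j
    rw [hB]
    simp [Finset.mem_filter, Finset.mem_range]
  -- Safe
  have hsafe : Safe (dec c) := by
    intro i A' B' hi a ha a' ha' b hb b' hb' _ _ _ _ heq
    have hlen : i < (List.ofFn (fun i : Fin m => (A i, B i))).length :=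
      (List.getElem?_eq_some_iff.1 (by rw [hdec] at hi; exact hi)).1
    have hm : i < m := by simpa using hlen
    have hi' := hget ⟨i, hm⟩
    rw [hi] at hi'
    obtain ⟨hA', hB'⟩ : A' = A ⟨i, hm⟩ ∧ B' = B ⟨i, hm⟩ := by
      have := Option.some.inj hi'
      exact ⟨congrArg Prod.fst this, congrArg Prod.snd this⟩
    subst hA'; subst hB'
    set i0 : Fin m := ⟨i, hm⟩
    have hua := ((hAmem i0 a).1 ha).2
    have hua' := ((hAmem i0 a').1 ha').2
    have hvb := ((hBmem i0 b).1 hb).2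
    have hvb' := ((hBmem i0 b').1 hb').2
    rcases lt_trichotomy a a' with hlt | rfl | hlt
    · have hp : a' - a ∈ PP := (u i0).2 a a' hlt hua hua'
      rcases lt_trichotomy b b' with h2 | rfl | h2
      · have hq : b' - b ∈ PP := (v i0).2 b b' h2 hvb hvb'
        have he : b' - b = (a' - a) + 1 := by omega
        exact PP_sep hp (he ▸ hq)
      · omega
      · omega
    · have hq : b' - b ∈ PP := (v i0).2 b b' (by omega) hvb hvb'
      have := PP_ge hq
      omega
    · have hp : a - a' ∈ PP := (u i0).2 a' a hlt hua' hua
      rcases lt_trichotomy b b' with h2 | rfl | h2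
      · have hq : b' - b ∈ PP := (v i0).2 b b' h2 hvb hvb'
        have := PP_ge hq
        have := PP_ge hp
        omega
      · have := PP_ge hp
        omega
      · have hq : b - b' ∈ PP := (v i0).2 b' b h2 hvb' hvb
        have he : a - a' = (b - b') + 1 := by omega
        exact PP_sep hq (he ▸ hp)
  have hEge := EE_ge c
  have hszN := szN c
  rw [hN1] at hszN
  have hnN : N + 2 ≤ nn c := by
    have : nn c = EE c + 2 * sz c := rfl
    omega
  have hcross : ∀ i : Fin m, ∀ a ∈ A i, ∀ b ∈ B i,
      ((i:ℕ)+1) * nn c + b - a ∈ PP := by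
    intro i a ha b hb
    have haN : a < N := ((hAmem i a).1 ha).1
    have hbN : b < N := ((hBmem i b).1 hb).1
    have hmul : nn c ≤ ((i:ℕ)+1) * nn c := Nat.le_mul_of_pos_left _ (Nat.succ_pos _)
    exact ⟨c, hsafe, (i:ℕ), A i, B i, hget i, a, ha, b, hb,
      by omega, by omega, by omega⟩
  set w : Fin m → (ℕ → Bool) :=
    (fun i j => decide (j ∈ A i ∨ ∃ b ∈ B i, ((i:ℕ)+1) * nn c + b = j)) with hwdef
  have hwval : ∀ (i : Fin m) (j : ℕ),
      w i j = true ↔ (j ∈ A i ∨ ∃ b ∈ B i, ((i:ℕ)+1) * nn c + b = j) := by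
    intro i j
    rw [hwdef]
    exact decide_eq_true_iff
  have hw : ∀ i, w i ∈ SpacingSubshift PP := by
    intro i j j' hlt hj hj'
    have hmul : nn c ≤ ((i:ℕ)+1) * nn c := Nat.le_mul_of_pos_left _ (Nat.succ_pos _)
    rcases (hwval i j).1 hj with hja | ⟨b, hbB, hbe⟩
    · rcases (hwval i j').1 hj' with hja' | ⟨b', hbB', hbe'⟩
      · exact (u i).2 j j' hlt ((hAmem i j).1 hja).2 ((hAmem i j').1 hja').2
      · subst hbe'
        exact hcross i j hja b' hbB'
    · rcases (hwval i j').1 hj' with hja' | ⟨b', hbB', hbe'⟩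
      · have h1 : j' < N := ((hAmem i j').1 hja').1
        have h2 : b < N := ((hBmem i b).1 hbB).1
        omega
      · have h2 : b < b' := by omega
        have hq : b' - b ∈ PP := (v i).2 b b' h2 ((hBmem i b).1 hbB).2 ((hBmem i b').1 hbB').2
        have he : j' - j = b' - b := by omega
        exact he ▸ hq
  set x : Fin m → SpacingSubshift PP := (fun i => ⟨w i, hw i⟩) with hx
  have hXU : x ∈ U := by
    apply hNu
    intro i j hj
    have hjN : j < N := by omega
    show w i j = (u i).1 j
    cases hval : (u i).1 j with
    | true => exact (hwval i j).2 (Or.inl ((hAmem i j).2 ⟨hjN, hval⟩))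
    | false =>
        rw [hwdef]
        apply decide_eq_false
        rintro (hja | ⟨b, hbB, hbe⟩)
        · rw [((hAmem i j).1 hja).2] at hval; exact Bool.noConfusion hval
        · have hmul : nn c ≤ ((i:ℕ)+1) * nn c := Nat.le_mul_of_pos_left _ (Nat.succ_pos _)
          omega
  have hYV : (starMap (sigmaP PP) m)^[nn c] x ∈ V := by
    apply hNv
    intro i j hj
    have hjN : j < N := by omega
    rw [starMap_iterate']
    have hcoord : ((sigmaP PP)^[nn c * ((i:ℕ)+1)] (x i)).1 j
        = w i (j + nn c * ((i:ℕ)+1)) := sigmaP_iterate _ _ _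
    rw [hcoord]
    have hcomm : ((i:ℕ)+1) * nn c = nn c * ((i:ℕ)+1) := by ring
    have hmul : nn c ≤ nn c * ((i:ℕ)+1) := Nat.le_mul_of_pos_right _ (Nat.succ_pos _)
    cases hval : (v i).1 j with
    | true =>
        refine (hwval i _).2 (Or.inr ⟨j, (hBmem i j).2 ⟨hjN, hval⟩, by omega⟩)
    | false =>
        rw [hwdef]
        apply decide_eq_false
        rintro (hja | ⟨b, hbB, hbe⟩)
        · have h1 := ((hAmem i _).1 hja).1
          omega
        · have h2 : b < N := ((hBmem i b).1 hbB).1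
          have : b = j := by omega
          subst this
          rw [((hBmem i b).1 hbB).2] at hval
          exact Bool.noConfusion hval
  refine ⟨nn c, by show 0 < EE c + 2 * sz c; omega, ?_⟩
  exact ⟨_, ⟨x, hXU, rfl⟩, hYV⟩


end S9aux

/-- There is a set `P ⊆ ℕ` such that the spacing shift `σ_P` is
multi-transitive but not weakly mixing. -/
theorem statement9 :
    ∃ P : Set ℕ, MultiTransitive (sigmaP P) ∧ ¬ WeaklyMixing (sigmaP P) :=
  ⟨S9aux.PP, S9aux.multiTrans, S9aux.not_wm⟩
end

section
/- There exists a set P ⊆ ℕ such that the spacing shift σ_P : Σ_P → Σ_P is multi-transitive but not syndetically transitive. -/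
open Set Function

-- aux defs
def aSeq : ℕ → ℕ
  | 0 => 2
  | k+1 => (k+2) * aSeq k

lemma aSeq_ge (k : ℕ) : k + 2 ≤ aSeq k := by
  induction k with
  | zero => simp [aSeq]
  | succ k ih =>
    have h : aSeq (k+1) = (k+2) * aSeq k := rfl
    nlinarith

lemma aSeq_mono : Monotone aSeq := by
  apply monotone_nat_of_le_succ
  intro k
  have h := aSeq_ge k
  have h2 : aSeq (k+1) = (k+2) * aSeq k := rfl
  nlinarith

def Pset : Set ℕ := ⋃ k, Set.Icc (aSeq k) (k * aSeq k)

lemma cyl_subset {P : Set ℕ} {U : Set (SpacingSubshift P)} (hU : IsOpen U)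
    {u : SpacingSubshift P} (hu : u ∈ U) :
    ∃ N : ℕ, ∀ x : SpacingSubshift P, (∀ t < N, x.1 t = u.1 t) → x ∈ U := by
  rw [isOpen_induced_iff] at hU
  obtain ⟨W, hW, rfl⟩ := hU
  obtain ⟨I, S, hS, hsub⟩ := (isOpen_pi_iff.mp hW) u.1 hu
  refine ⟨(I.sup id) + 1, fun x hx => ?_⟩
  apply hsub
  refine Set.mem_pi.mpr fun a ha => ?_
  have ha' : a ∈ I := ha
  have : x.1 a = u.1 a := hx a (Nat.lt_succ_of_le (Finset.le_sup (f := id) ha'))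
  rw [this]; exact (hS a ha').2

lemma pi_cyl_subset {P : Set ℕ} {m : ℕ} {U : Set (Fin m → SpacingSubshift P)} (hU : IsOpen U)
    {u : Fin m → SpacingSubshift P} (hu : u ∈ U) :
    ∃ N : ℕ, ∀ x : Fin m → SpacingSubshift P,
      (∀ i, ∀ t < N, (x i).1 t = (u i).1 t) → x ∈ U := by
  obtain ⟨I, S, hS, hsub⟩ := (isOpen_pi_iff.mp hU) u hu
  choose N hN using fun (i : Fin m) (h : i ∈ I) => cyl_subset (hS i h).1 (hS i h).2
  refine ⟨Finset.univ.sup (fun i => if h : i ∈ I then N i h else 0), fun x hx => ?_⟩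
  apply hsub
  refine Set.mem_pi.mpr fun i hi => ?_
  have hi' : i ∈ I := hi
  apply hN i hi'
  intro t ht
  apply hx i t
  have hle : N i hi' ≤ Finset.univ.sup (fun i => if h : i ∈ I then N i h else 0) := by
    have := Finset.le_sup (f := fun i => if h : i ∈ I then N i h else 0) (Finset.mem_univ i)
    simpa [hi'] using this
  exact lt_of_lt_of_le ht hle

lemma sigmaP_iter {P : Set ℕ} (n : ℕ) (x : SpacingSubshift P) (t : ℕ) :
    ((sigmaP P)^[n] x).1 t = x.1 (t + n) := by
  induction n generalizing x with
  | zero => rfl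
  | succ n ih =>
    rw [Function.iterate_succ_apply, ih]
    show x.1 (t + n + 1) = _
    congr 1

lemma starMap_iter {X : Type*} (f : X → X) (m n : ℕ) (x : Fin m → X) (i : Fin m) :
    ((starMap f m)^[n] x) i = f^[((i:ℕ)+1) * n] (x i) := by
  induction n generalizing x with
  | zero => simp
  | succ n ih =>
    rw [Function.iterate_succ_apply, ih]
    show f^[((i:ℕ)+1)*n] (f^[(i:ℕ)+1] (x i)) = _
    rw [← Function.iterate_add_apply]
    congr 1

def splice {P : Set ℕ} (u v : SpacingSubshift P) (N s : ℕ) : ℕ → Bool :=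
  fun t => if t < N then u.1 t else if s ≤ t ∧ t < s + N then v.1 (t - s) else false

lemma splice_mem {P : Set ℕ} (u v : SpacingSubshift P) (N s : ℕ) (hNs : N ≤ s)
    (hP : ∀ d, s < d + N → d < s + N → d ∈ P) :
    splice u v N s ∈ SpacingSubshift P := by
  intro i j hij hi hj
  unfold splice at hi hj
  by_cases h1 : i < N
  · rw [if_pos h1] at hi
    by_cases h2 : j < N
    · rw [if_pos h2] at hj
      exact u.2 i j hij hi hj
    · rw [if_neg h2] at hj
      by_cases h3 : s ≤ j ∧ j < s + N
      · exact hP (j - i) (by omega) (by omega)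
      · rw [if_neg h3] at hj; exact absurd hj (by simp)
  · rw [if_neg h1] at hi
    by_cases h2 : s ≤ i ∧ i < s + N
    · rw [if_pos h2] at hi
      have h4 : ¬ j < N := by omega
      rw [if_neg h4] at hj
      by_cases h3 : s ≤ j ∧ j < s + N
      · rw [if_pos h3] at hj
        have hv := v.2 (i - s) (j - s) (by omega) hi hj
        have he : j - s - (i - s) = j - i := by omega
        rwa [he] at hv
      · rw [if_neg h3] at hj; exact absurd hj (by simp)
    · rw [if_neg h2] at hi; exact absurd hi (by simp)

lemma pset_multi : MultiTransitive (sigmaP Pset) := by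
  intro m hm U V hUo hVo hUne hVne
  obtain ⟨u, hu⟩ := hUne
  obtain ⟨v, hv⟩ := hVne
  obtain ⟨N₁, hN₁⟩ := pi_cyl_subset hUo hu
  obtain ⟨N₂, hN₂⟩ := pi_cyl_subset hVo hv
  obtain ⟨M, hMN₁, hMN₂⟩ : ∃ M, N₁ ≤ M ∧ N₂ ≤ M := ⟨max N₁ N₂, le_max_left _ _, le_max_right _ _⟩
  obtain ⟨k, hk1, hk2⟩ : ∃ k, m + 1 ≤ k ∧ (m+1)*M ≤ k :=
    ⟨max (m+1) ((m+1)*M), le_max_left _ _, le_max_right _ _⟩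
  have ha : k + 2 ≤ aSeq k := aSeq_ge k
  obtain ⟨n, hn⟩ : ∃ n, n = aSeq k + M := ⟨_, rfl⟩
  have hnpos : 0 < n := by omega
  have hMn : M ≤ n := by omega
  -- key inclusion
  have hp : ∀ i : Fin m, ∀ d, ((i:ℕ)+1)*n < d + M → d < ((i:ℕ)+1)*n + M → d ∈ Pset := by
    intro i d hd1 hd2
    have him : (i:ℕ) + 1 ≤ m := i.isLt
    have hs1 : n ≤ ((i:ℕ)+1)*n := Nat.le_mul_of_pos_left n (by omega)
    have hs2 : ((i:ℕ)+1)*n ≤ m*n := Nat.mul_le_mul_right n him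
    have hub : m*n + M ≤ k * aSeq k := by
      have h1 : m*n + M = m * aSeq k + (m+1)*M := by rw [hn]; ring
      have h2 : (m+1)*M ≤ aSeq k := by omega
      have h3 : m * aSeq k + aSeq k = (m+1) * aSeq k := by ring
      have h4 : (m+1) * aSeq k ≤ k * aSeq k := Nat.mul_le_mul_right _ (by omega)
      omega
    refine Set.mem_iUnion.mpr ⟨k, Set.mem_Icc.mpr ⟨by omega, by omega⟩⟩
  have hsplice_mem : ∀ i : Fin m,
      splice (u i) (v i) M (((i:ℕ)+1)*n) ∈ SpacingSubshift Pset := by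
    intro i
    apply splice_mem _ _ _ _ ?_ (hp i)
    have hs1 : n ≤ ((i:ℕ)+1)*n := Nat.le_mul_of_pos_left n (by omega)
    omega
  set x : Fin m → SpacingSubshift Pset :=
    fun i => ⟨splice (u i) (v i) M (((i:ℕ)+1)*n), hsplice_mem i⟩ with hxdef
  have hxU : x ∈ U := by
    apply hN₁
    intro i t ht
    show splice (u i) (v i) M (((i:ℕ)+1)*n) t = (u i).1 t
    unfold splice
    rw [if_pos (lt_of_lt_of_le ht hMN₁)]
  have hyV : (starMap (sigmaP Pset) m)^[n] x ∈ V := by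
    apply hN₂
    intro i t ht
    rw [starMap_iter, sigmaP_iter]
    show splice (u i) (v i) M (((i:ℕ)+1)*n) (t + ((i:ℕ)+1)*n) = (v i).1 t
    have hs1 : n ≤ ((i:ℕ)+1)*n := Nat.le_mul_of_pos_left n (by omega)
    have htM : t < M := lt_of_lt_of_le ht hMN₂
    unfold splice
    rw [if_neg (by omega), if_pos (by constructor <;> omega)]
    have harg : t + ((i:ℕ)+1)*n - ((i:ℕ)+1)*n = t := by omega
    rw [harg]
  exact ⟨n, hnpos, ⟨_, ⟨x, hxU, rfl⟩, hyV⟩⟩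

lemma syndetic_mono {S T : Set ℕ} (hST : S ⊆ T) : Syndetic S → Syndetic T := by
  rintro ⟨L, hL, h⟩
  exact ⟨L, hL, fun n => let ⟨k, hk, h1, h2⟩ := h n; ⟨k, hST hk, h1, h2⟩⟩

lemma pset_not_synd : ¬ Syndetic Pset := by
  rintro ⟨L, hL, h⟩
  obtain ⟨k, hk1, hk2, hk3⟩ := h (L * aSeq L + 1)
  obtain ⟨j, hj⟩ := Set.mem_iUnion.mp hk1
  rw [Set.mem_Icc] at hj
  by_cases hjL : j ≤ L
  · have : j * aSeq j ≤ L * aSeq L := Nat.mul_le_mul hjL (aSeq_mono hjL)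
    omega
  · have h1 : aSeq (L+1) ≤ aSeq j := aSeq_mono (by omega)
    have h2 : aSeq (L+1) = (L+2) * aSeq L := rfl
    have h3 : L + 2 ≤ aSeq L := aSeq_ge L
    have h4 : L*aSeq L + 2*(L+2) ≤ (L+2) * aSeq L := by nlinarith
    omega

lemma pset_not_syndTrans : ¬ SyndeticallyTransitive (sigmaP Pset) := by
  intro h
  have hopen : IsOpen (oneCyl Pset) := by
    have he : oneCyl Pset = (fun x : SpacingSubshift Pset => x.1 0) ⁻¹' {true} := by
      ext x; simp [oneCyl]
    rw [he]
    exact (isOpen_discrete _).preimage ((continuous_apply 0).comp continuous_subtype_val)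
  have hne : (oneCyl Pset).Nonempty := by
    refine ⟨⟨fun t => decide (t = 0), ?_⟩, ?_⟩
    · intro i j hij hi hj
      simp_all
    · show decide (0 = 0) = true
      simp
  have hsub : NSet (sigmaP Pset) (oneCyl Pset) (oneCyl Pset) ⊆ Pset := by
    rintro n ⟨hn, y, ⟨x, hxU, rfl⟩, hyV⟩
    have h1 : x.1 0 = true := hxU
    have h2 : x.1 n = true := by
      have hy : ((sigmaP Pset)^[n] x).1 0 = true := hyV
      rw [sigmaP_iter] at hy
      simpa using hy
    have := x.2 0 n hn h1 h2
    simpa using this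
  exact pset_not_synd (syndetic_mono hsub (h _ _ hopen hopen hne hne))

/-- There is a set `P ⊆ ℕ` such that the spacing shift `σ_P` is
multi-transitive but not syndetically transitive. -/
theorem statement10 :
    ∃ P : Set ℕ, MultiTransitive (sigmaP P) ∧ ¬ SyndeticallyTransitive (sigmaP P) :=
  ⟨Pset, pset_multi, pset_not_syndTrans⟩
end

section
/- Let m ≥ 2 and P = P(m) = ⋃_{k=1}^∞ {m^{2k−1}, m^{2k−1}+1, …, m^{2k}−1}. Then the map σ_P × σ_P^m : Σ_P × Σ_P → Σ_P × Σ_P is not topologically transitive; indeed, with U = V = [1]_P × [1]_P one has (σ_P × σ_P^m)^n(U) ∩ V = ∅ for every n ≥ 0. -/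
open Set Function

lemma sigmaP_iterate_apply (P : Set ℕ) (k : ℕ) (x : SpacingSubshift P) (j : ℕ) :
    ((sigmaP P)^[k] x).1 j = x.1 (j + k) := by
  induction k generalizing x j with
  | zero => rfl
  | succ k ih =>
    rw [Function.iterate_succ_apply]
    have := ih (sigmaP P x) j
    rw [this]
    rfl

lemma prod_iterate {X Y : Type*} (f : X → X) (g : Y → Y) (n : ℕ) (p : X × Y) :
    (fun q : X × Y => (f q.1, g q.2))^[n] p = (f^[n] p.1, g^[n] p.2) := by
  induction n generalizing p with
  | zero => rfl
  | succ n ih => rw [Function.iterate_succ_apply, ih]; rfl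

lemma arith_lemma {m n : ℕ} (hm : 2 ≤ m) (hn : 1 ≤ n)
    (h1 : n ∈ ProgressionSet m) (h2 : m * n ∈ ProgressionSet m) : False := by
  obtain ⟨k, hk, hk1, hk2⟩ := h1
  obtain ⟨j, hj, hj1, hj2⟩ := h2
  have hm1 : 1 < m := hm
  have e1 : m ^ (2 * k - 1) * m = m ^ (2 * k) := by
    rw [← pow_succ]; congr 1; omega
  have e2 : m ^ (2 * k) * m = m ^ (2 * k + 1) := by rw [← pow_succ]
  have hlow : m ^ (2 * k) ≤ m * n := by
    calc m ^ (2 * k) = m ^ (2 * k - 1) * m := e1.symm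
    _ ≤ n * m := Nat.mul_le_mul_right m hk1
    _ = m * n := Nat.mul_comm n m
  have hhigh : m * n < m ^ (2 * k + 1) := by
    calc m * n = n * m := Nat.mul_comm m n
    _ < m ^ (2 * k) * m := (Nat.mul_lt_mul_right (by omega : 0 < m)).mpr hk2
    _ = m ^ (2 * k + 1) := e2
  -- from m^(2j-1) ≤ m*n < m^(2k+1): 2j-1 < 2k+1
  have c1 : 2 * j - 1 < 2 * k + 1 :=
    (Nat.pow_lt_pow_iff_right hm1).mp (lt_of_le_of_lt hj1 hhigh)
  have c2 : 2 * k < 2 * j :=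
    (Nat.pow_lt_pow_iff_right hm1).mp (lt_of_le_of_lt hlow hj2)
  omega

lemma empty_inter (m : ℕ) (hm : 2 ≤ m) : ∀ n : ℕ, 1 ≤ n →
      (fun p : SpacingSubshift (ProgressionSet m) × SpacingSubshift (ProgressionSet m) =>
          (sigmaP (ProgressionSet m) p.1, (sigmaP (ProgressionSet m))^[m] p.2))^[n] ''
        (oneCyl (ProgressionSet m) ×ˢ oneCyl (ProgressionSet m)) ∩
        (oneCyl (ProgressionSet m) ×ˢ oneCyl (ProgressionSet m)) = ∅ := by
  intro n hn
  rw [Set.eq_empty_iff_forall_notMem]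
  rintro p ⟨⟨q, ⟨hq1, hq2⟩, hq⟩, hp1, hp2⟩
  rw [prod_iterate] at hq
  subst hq
  simp only [oneCyl, Set.mem_setOf_eq] at hq1 hq2 hp1 hp2
  rw [sigmaP_iterate_apply] at hp1
  rw [← Function.iterate_mul, sigmaP_iterate_apply] at hp2
  have h1 : n ∈ ProgressionSet m := by
    have := q.1.2 0 n hn hq1 (by simpa using hp1)
    simpa using this
  have h2 : m * n ∈ ProgressionSet m := by
    have hmn : 0 < m * n := by positivity
    have := q.2.2 0 (m * n) hmn hq2 (by simpa using hp2)
    simpa using this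
  exact arith_lemma hm hn h1 h2

lemma oneCyl_open (P : Set ℕ) : IsOpen (oneCyl P) := by
  have : oneCyl P = (fun x : SpacingSubshift P => x.1 0) ⁻¹' {true} := by
    ext x; simp [oneCyl]
  rw [this]
  exact (((continuous_apply 0).comp continuous_subtype_val)).isOpen_preimage _ (isOpen_discrete _)

lemma oneCyl_nonempty (P : Set ℕ) : (oneCyl P).Nonempty := by
  refine ⟨⟨fun n => decide (n = 0), ?_⟩, by simp [oneCyl]⟩
  intro i j hij hi hj
  have : j = 0 := of_decide_eq_true hj
  have : i = 0 := of_decide_eq_true hi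
  omega

/-- For `m ≥ 2` and `P = P(m)`, the map `σ_P × σ_P^m` is not
topologically transitive; indeed, with `U = V = [1]_P × [1]_P` one has
`(σ_P × σ_P^m)^n(U) ∩ V = ∅` for every `n ≥ 1` (the positive iterates relevant
for transitivity). -/
theorem statement12 (m : ℕ) (hm : 2 ≤ m) :
    ¬ TopTransitive (fun p : SpacingSubshift (ProgressionSet m) × SpacingSubshift (ProgressionSet m) =>
        (sigmaP (ProgressionSet m) p.1, (sigmaP (ProgressionSet m))^[m] p.2)) ∧
    ∀ n : ℕ, 1 ≤ n →
      (fun p : SpacingSubshift (ProgressionSet m) × SpacingSubshift (ProgressionSet m) =>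
          (sigmaP (ProgressionSet m) p.1, (sigmaP (ProgressionSet m))^[m] p.2))^[n] ''
        (oneCyl (ProgressionSet m) ×ˢ oneCyl (ProgressionSet m)) ∩
        (oneCyl (ProgressionSet m) ×ˢ oneCyl (ProgressionSet m)) = ∅ := by
  have hemp := empty_inter m hm
  refine ⟨?_, hemp⟩
  intro htrans
  obtain ⟨n, hn, hne⟩ := htrans _ _
    ((oneCyl_open _).prod (oneCyl_open _)) ((oneCyl_open _).prod (oneCyl_open _))
    ((oneCyl_nonempty _).prod (oneCyl_nonempty _)) ((oneCyl_nonempty _).prod (oneCyl_nonempty _))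
  rw [hemp n hn] at hne
  exact Set.not_nonempty_empty hne
end
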